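/- arXiv:0807.3210 — 11 statements merged into one kernel-verified Lean document; each statement's English description precedes it below -/
import Mathlib

section
/- Let X be an mm-space and let κ, κ' > 0 with κ > κ'. Then ObsDiam_ℝ(X; −κ') ≥ Sep(X; κ, κ). -/
open MeasureTheory Metric Set Filter Topology ENNReal

noncomputable section

/-- The extended distance `d(A,B)` between two subsets of an (extended) metric space. -/
def setEDist {X : Type*} [PseudoEMetricSpace X] (A B : Set X) : ℝ≥0∞ :=
  ⨅ (x ∈ A) (y ∈ B), edist x y

/-- The partial diameter `diam(ν, ν(X) − κ)`: the infimum of the diameters of Borel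
subsets of measure at least `ν(X) − κ`. -/
def partialDiam {X : Type*} [PseudoEMetricSpace X] [MeasurableSpace X]
    (ν : Measure X) (κ : ℝ≥0∞) : ℝ≥0∞ :=
  ⨅ (A : Set X) (_ : MeasurableSet A) (_ : ν univ - κ ≤ ν A), EMetric.diam A

/-- The separation distance `Sep(ν; κ₁, κ₂)`: the supremum of `d(A,B)` over Borel sets
`A, B` with `ν(A) ≥ κ₁` and `ν(B) ≥ κ₂`. -/
def sepDist {X : Type*} [PseudoEMetricSpace X] [MeasurableSpace X]
    (ν : Measure X) (κ₁ κ₂ : ℝ≥0∞) : ℝ≥0∞ :=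
  ⨆ (A : Set X) (B : Set X) (_ : MeasurableSet A) (_ : MeasurableSet B)
    (_ : κ₁ ≤ ν A) (_ : κ₂ ≤ ν B), setEDist A B

/-- The observable diameter `ObsDiam_Y(X; −κ)`. -/
def obsDiam (Y : Type*) [PseudoEMetricSpace Y] [MeasurableSpace Y]
    {X : Type*} [PseudoEMetricSpace X] [MeasurableSpace X]
    (μ : Measure X) (κ : ℝ≥0∞) : ℝ≥0∞ :=
  ⨆ (f : X → Y) (_ : LipschitzWith 1 f), partialDiam (Measure.map f μ) κ

/-- A sequence of mm-spaces is a Lévy family if its observable diameters (viewed in `ℝ`)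
tend to zero for every `κ > 0`. -/
def IsLevyFamily (X : ℕ → Type*) [∀ n, PseudoEMetricSpace (X n)]
    [∀ n, MeasurableSpace (X n)] (μ : ∀ n, Measure (X n)) : Prop :=
  ∀ κ : ℝ≥0∞, 0 < κ → Tendsto (fun n => obsDiam ℝ (μ n) κ) atTop (nhds 0)

theorem stmt_2 {X : Type*} [MetricSpace X] [CompleteSpace X]
    [TopologicalSpace.SeparableSpace X] [MeasurableSpace X] [BorelSpace X]
    (μ : Measure X) [IsFiniteMeasure μ]
    (κ κ' : ℝ≥0∞) (hκ' : 0 < κ') (hκκ' : κ' < κ) :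
    sepDist μ κ κ ≤ obsDiam ℝ μ κ' := by
  rw [sepDist]
  refine iSup_le fun A => iSup_le fun B => iSup_le fun hA => iSup_le fun hB =>
    iSup_le fun hμA => iSup_le fun hμB => ?_
  have hA0 : A.Nonempty := by
    rcases A.eq_empty_or_nonempty with h | h
    · exfalso
      have : μ A = 0 := by simp [h]
      exact (hκ'.trans hκκ').ne' (le_antisymm (this ▸ hμA) bot_le)
    · exact h
  set f : X → ℝ := fun x => infDist x A with hf_def
  have hf : LipschitzWith 1 f := lipschitz_infDist_pt A
  have hfm : Measurable f := hf.continuous.measurable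
  have key : setEDist A B ≤ partialDiam (Measure.map f μ) κ' := by
    refine le_iInf fun S => le_iInf fun hS => le_iInf fun hνS => ?_
    rw [Measure.map_apply hfm MeasurableSet.univ, Measure.map_apply hfm hS,
      Set.preimage_univ] at hνS
    set T : Set X := f ⁻¹' S with hT_def
    have hTm : MeasurableSet T := hfm hS
    have hμT : μ univ - κ' ≤ μ T := hνS
    have hfin : μ univ ≠ ⊤ := measure_ne_top μ univ
    have hlt : ∀ C : Set X, κ ≤ μ C → μ univ < μ C + μ T := by
      intro C hμC
      calc μ univ ≤ κ' + (μ univ - κ') := le_add_tsub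
        _ < κ + (μ univ - κ') := by
            exact ENNReal.add_lt_add_right (ne_top_of_le_ne_top hfin tsub_le_self) hκκ'
        _ ≤ μ C + μ T := add_le_add hμC hμT
    obtain ⟨x, hxA, hxT⟩ :=
      nonempty_inter_of_measure_lt_add μ hTm (subset_univ A) (subset_univ T) (hlt A hμA)
    obtain ⟨y, hyB, hyT⟩ :=
      nonempty_inter_of_measure_lt_add μ hTm (subset_univ B) (subset_univ T) (hlt B hμB)
    have hAB : setEDist A B ≤ EMetric.infEdist y A := by
      rw [EMetric.infEdist]
      refine le_iInf fun a => le_iInf fun ha => ?_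
      calc setEDist A B ≤ ⨅ b ∈ B, edist a b := iInf₂_le a ha
        _ ≤ edist a y := iInf₂_le y hyB
        _ = edist y a := edist_comm a y
    have hfx : f x = 0 := infDist_zero_of_mem hxA
    have hne : EMetric.infEdist y A ≠ ⊤ := by
      obtain ⟨a, ha⟩ := hA0
      exact ne_top_of_le_ne_top (edist_ne_top y a) (EMetric.infEdist_le_edist_of_mem ha)
    have hedist : edist (f x) (f y) = EMetric.infEdist y A := by
      rw [hfx, edist_dist, Real.dist_eq, zero_sub, abs_neg, abs_of_nonneg infDist_nonneg]
      simp only [infDist]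
      exact ENNReal.ofReal_toReal hne
    calc setEDist A B ≤ edist (f x) (f y) := hedist ▸ hAB
      _ ≤ EMetric.diam S := EMetric.edist_le_diam_of_mem hxT hyT
  exact key.trans (le_iSup_of_le f (le_iSup_of_le hf le_rfl))
end
end

section
/- Let ν be a finite Borel measure on ℝ with m := ν(ℝ). Then for every κ > 0, diam(ν, m − 2κ) ≤ Sep(ν; κ, κ). In particular, for every mm-space X and every κ > 0, ObsDiam_ℝ(X; −2κ) ≤ Sep(X; κ, κ). -/
open MeasureTheory Metric Set Filter Topology ENNReal

noncomputable section

lemma setEDist_le_edist {X : Type*} [PseudoEMetricSpace X] {A B : Set X} {x y : X}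
    (hx : x ∈ A) (hy : y ∈ B) : setEDist A B ≤ edist x y :=
  le_trans (iInf₂_le x hx) (iInf₂_le y hy)

lemma partialDiam_le_sepDist (ν : Measure ℝ) [IsFiniteMeasure ν] (κ : ℝ≥0∞) (hκ : 0 < κ) :
    partialDiam ν (2 * κ) ≤ sepDist ν κ κ := by
  by_cases hbig : ν univ ≤ 2 * κ
  · calc partialDiam ν (2 * κ) ≤ EMetric.diam (∅ : Set ℝ) := by
          refine le_trans (iInf_le _ ∅) ?_
          refine le_trans (iInf_le _ MeasurableSet.empty) ?_
          refine iInf_le _ ?_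
          simpa using tsub_eq_zero_of_le hbig
        _ = 0 := EMetric.diam_empty
        _ ≤ sepDist ν κ κ := zero_le
  push_neg at hbig
  set S : Set ℝ := {t | κ ≤ ν (Iic t)} with hS
  set T : Set ℝ := {t | κ ≤ ν (Ici t)} with hT
  have hSup : ∀ {s t : ℝ}, s ∈ S → s ≤ t → t ∈ S :=
    fun hs hst => le_trans hs (measure_mono (Iic_subset_Iic.2 hst))
  have hTdown : ∀ {s t : ℝ}, s ∈ T → t ≤ s → t ∈ T :=
    fun hs hst => le_trans hs (measure_mono (Ici_subset_Ici.2 hst))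
  have hκuniv : κ < ν univ := lt_of_le_of_lt (by
      calc κ = 1 * κ := (one_mul κ).symm
      _ ≤ 2 * κ := by gcongr; norm_num) hbig
  -- S and T are nonempty
  have hSne : S.Nonempty := by
    obtain ⟨t, ht⟩ := ((tendsto_measure_Iic_atTop ν).eventually_const_le hκuniv).exists
    exact ⟨t, ht⟩
  have hTne : T.Nonempty := by
    obtain ⟨t, ht⟩ := ((tendsto_measure_Ici_atBot ν).eventually_const_le hκuniv).exists
    exact ⟨t, ht⟩
  -- S is bounded below
  have hSbdd : BddBelow S := by
    by_contra hb
    have hall : ∀ t : ℝ, κ ≤ ν (Iic t) := by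
      intro t
      by_contra ht
      exact hb ⟨t, fun s hs => by
        by_contra hst
        exact ht (le_trans hs (measure_mono (Iic_subset_Iic.2 (le_of_not_ge hst))))⟩
    have hanti : Antitone (fun n : ℕ => Iic (-(n : ℝ))) := by
      intro m n hmn
      exact Iic_subset_Iic.2 (by exact_mod_cast neg_le_neg (by exact_mod_cast hmn))
    have hinter : (⋂ n : ℕ, Iic (-(n : ℝ))) = ∅ := by
      ext x
      simp only [mem_iInter, mem_Iic, mem_empty_iff_false, iff_false, not_forall, not_le]
      obtain ⟨n, hn⟩ := exists_nat_gt (-x)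
      exact ⟨n, by linarith⟩
    have := hanti.measure_iInter (fun n => measurableSet_Iic.nullMeasurableSet)
      ⟨0, measure_ne_top ν _⟩
    rw [hinter] at this
    have : κ ≤ ν (∅ : Set ℝ) := this ▸ le_iInf fun n => hall _
    simp only [measure_empty, le_zero_iff] at this
    exact hκ.ne' this
  have hTbdd : BddAbove T := by
    by_contra hb
    have hall : ∀ t : ℝ, κ ≤ ν (Ici t) := by
      intro t
      by_contra ht
      exact hb ⟨t, fun s hs => by
        by_contra hst
        exact ht (le_trans hs (measure_mono (Ici_subset_Ici.2 (le_of_not_ge hst))))⟩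
    have hanti : Antitone (fun n : ℕ => Ici (n : ℝ)) := by
      intro m n hmn
      exact Ici_subset_Ici.2 (by exact_mod_cast hmn)
    have hinter : (⋂ n : ℕ, Ici (n : ℝ)) = ∅ := by
      ext x
      simp only [mem_iInter, mem_Ici, mem_empty_iff_false, iff_false, not_forall, not_le]
      obtain ⟨n, hn⟩ := exists_nat_gt x
      exact ⟨n, hn⟩
    have := hanti.measure_iInter (fun n => measurableSet_Ici.nullMeasurableSet)
      ⟨0, measure_ne_top ν _⟩
    rw [hinter] at this
    have : κ ≤ ν (∅ : Set ℝ) := this ▸ le_iInf fun n => hall _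
    simp only [measure_empty, le_zero_iff] at this
    exact hκ.ne' this
  set a : ℝ := sInf S with ha
  set b : ℝ := sSup T with hb
  -- key measure estimates
  have ha1 : ν (Iio a) ≤ κ := by
    have hUnion : Iio a = ⋃ n : ℕ, Iic (a - ((n : ℝ) + 1)⁻¹) := by
      ext x
      simp only [mem_Iio, mem_iUnion, mem_Iic]
      constructor
      · intro hx
        obtain ⟨n, hn⟩ := exists_nat_one_div_lt (show (0:ℝ) < a - x by linarith)
        exact ⟨n, by rw [one_div] at hn; linarith⟩
      · rintro ⟨n, hn⟩
        have : (0:ℝ) < ((n : ℝ) + 1)⁻¹ := by positivity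
        linarith
    have hmono : Monotone (fun n : ℕ => Iic (a - ((n : ℝ) + 1)⁻¹)) := by
      intro m n hmn
      refine Iic_subset_Iic.2 ?_
      have : ((n : ℝ) + 1)⁻¹ ≤ ((m : ℝ) + 1)⁻¹ := by
        apply inv_anti₀ (by positivity)
        exact_mod_cast add_le_add_left (Nat.cast_le.2 hmn) 1
      linarith
    rw [hUnion, hmono.measure_iUnion]
    refine iSup_le fun n => ?_
    have hnotmem : a - ((n : ℝ) + 1)⁻¹ ∉ S := by
      intro hmem
      have := csInf_le hSbdd hmem
      have hpos : (0:ℝ) < ((n : ℝ) + 1)⁻¹ := by positivity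
      rw [← ha] at this
      linarith
    exact le_of_lt (not_le.1 hnotmem)
  have hb1 : ν (Ioi b) ≤ κ := by
    have hUnion : Ioi b = ⋃ n : ℕ, Ici (b + ((n : ℝ) + 1)⁻¹) := by
      ext x
      simp only [mem_Ioi, mem_iUnion, mem_Ici]
      constructor
      · intro hx
        obtain ⟨n, hn⟩ := exists_nat_one_div_lt (show (0:ℝ) < x - b by linarith)
        exact ⟨n, by rw [one_div] at hn; linarith⟩
      · rintro ⟨n, hn⟩
        have : (0:ℝ) < ((n : ℝ) + 1)⁻¹ := by positivity
        linarith
    have hmono : Monotone (fun n : ℕ => Ici (b + ((n : ℝ) + 1)⁻¹)) := by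
      intro m n hmn
      refine Ici_subset_Ici.2 ?_
      have : ((n : ℝ) + 1)⁻¹ ≤ ((m : ℝ) + 1)⁻¹ := by
        apply inv_anti₀ (by positivity)
        exact_mod_cast add_le_add_left (Nat.cast_le.2 hmn) 1
      linarith
    rw [hUnion, hmono.measure_iUnion]
    refine iSup_le fun n => ?_
    have hnotmem : b + ((n : ℝ) + 1)⁻¹ ∉ T := by
      intro hmem
      have := le_csSup hTbdd hmem
      have hpos : (0:ℝ) < ((n : ℝ) + 1)⁻¹ := by positivity
      rw [← hb] at this
      linarith
    exact le_of_lt (not_le.1 hnotmem)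
  have ha2 : κ ≤ ν (Iic a) := by
    have hmem : ∀ n : ℕ, a + ((n : ℝ) + 1)⁻¹ ∈ S := by
      intro n
      have hpos : (0:ℝ) < ((n : ℝ) + 1)⁻¹ := by positivity
      obtain ⟨t, htS, htlt⟩ := (csInf_lt_iff hSbdd hSne).1
        (show sInf S < a + ((n : ℝ) + 1)⁻¹ by rw [← ha]; linarith)
      exact hSup htS (le_of_lt htlt)
    have hInter : Iic a = ⋂ n : ℕ, Iic (a + ((n : ℝ) + 1)⁻¹) := by
      ext x
      simp only [mem_Iic, mem_iInter]
      constructor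
      · intro hx n
        have : (0:ℝ) < ((n : ℝ) + 1)⁻¹ := by positivity
        linarith
      · intro hx
        by_contra hxa
        push_neg at hxa
        obtain ⟨n, hn⟩ := exists_nat_one_div_lt (show (0:ℝ) < x - a by linarith)
        rw [one_div] at hn
        have := hx n
        linarith
    have hanti : Antitone (fun n : ℕ => Iic (a + ((n : ℝ) + 1)⁻¹)) := by
      intro m n hmn
      refine Iic_subset_Iic.2 ?_
      have : ((n : ℝ) + 1)⁻¹ ≤ ((m : ℝ) + 1)⁻¹ := by
        apply inv_anti₀ (by positivity)
        exact_mod_cast add_le_add_left (Nat.cast_le.2 hmn) 1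
      linarith
    rw [hInter, hanti.measure_iInter (fun n => measurableSet_Iic.nullMeasurableSet)
      ⟨0, measure_ne_top ν _⟩]
    exact le_iInf fun n => hmem n
  have hb2 : κ ≤ ν (Ici b) := by
    have hmem : ∀ n : ℕ, b - ((n : ℝ) + 1)⁻¹ ∈ T := by
      intro n
      have hpos : (0:ℝ) < ((n : ℝ) + 1)⁻¹ := by positivity
      obtain ⟨t, htT, htlt⟩ := (lt_csSup_iff hTbdd hTne).1
        (show b - ((n : ℝ) + 1)⁻¹ < sSup T by rw [← hb]; linarith)
      exact hTdown htT (le_of_lt htlt)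
    have hInter : Ici b = ⋂ n : ℕ, Ici (b - ((n : ℝ) + 1)⁻¹) := by
      ext x
      simp only [mem_Ici, mem_iInter]
      constructor
      · intro hx n
        have : (0:ℝ) < ((n : ℝ) + 1)⁻¹ := by positivity
        linarith
      · intro hx
        by_contra hxb
        push_neg at hxb
        obtain ⟨n, hn⟩ := exists_nat_one_div_lt (show (0:ℝ) < b - x by linarith)
        rw [one_div] at hn
        have := hx n
        linarith
    have hanti : Antitone (fun n : ℕ => Ici (b - ((n : ℝ) + 1)⁻¹)) := by
      intro m n hmn
      refine Ici_subset_Ici.2 ?_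
      have : ((n : ℝ) + 1)⁻¹ ≤ ((m : ℝ) + 1)⁻¹ := by
        apply inv_anti₀ (by positivity)
        exact_mod_cast add_le_add_left (Nat.cast_le.2 hmn) 1
      linarith
    rw [hInter, hanti.measure_iInter (fun n => measurableSet_Ici.nullMeasurableSet)
      ⟨0, measure_ne_top ν _⟩]
    exact le_iInf fun n => hmem n
  -- a ≤ b
  have hab : a ≤ b := by
    by_contra hba
    push_neg at hba
    have hsub : Ici a ⊆ Ioi b := fun x hx => lt_of_lt_of_le hba hx
    have : ν univ ≤ 2 * κ := by
      calc ν univ = ν (Iio a ∪ Ici a) := by rw [Iio_union_Ici]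
        _ ≤ ν (Iio a) + ν (Ici a) := measure_union_le _ _
        _ ≤ κ + κ := add_le_add ha1 (le_trans (measure_mono hsub) hb1)
        _ = 2 * κ := (two_mul κ).symm
    exact absurd this (not_le.2 hbig)
  -- the partial diameter bound
  have hmeas : ν univ - 2 * κ ≤ ν (Icc a b) := by
    rw [tsub_le_iff_right]
    have hcover : (univ : Set ℝ) ⊆ Iio a ∪ (Icc a b ∪ Ioi b) := by
      intro x _
      rcases lt_or_ge x a with h | h
      · exact Or.inl h
      rcases le_or_gt x b with h' | h'
      · exact Or.inr (Or.inl ⟨h, h'⟩)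
      · exact Or.inr (Or.inr h')
    calc ν univ ≤ ν (Iio a ∪ (Icc a b ∪ Ioi b)) := measure_mono hcover
      _ ≤ ν (Iio a) + (ν (Icc a b) + ν (Ioi b)) :=
        le_trans (measure_union_le _ _) (by gcongr; exact measure_union_le _ _)
      _ ≤ κ + (ν (Icc a b) + κ) := by gcongr
      _ = ν (Icc a b) + 2 * κ := by ring
  have hsep : ENNReal.ofReal (b - a) ≤ sepDist ν κ κ := by
    have hdist : ENNReal.ofReal (b - a) ≤ setEDist (Iic a) (Ici b) := by
      refine le_iInf₂ fun x hx => le_iInf₂ fun y hy => ?_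
      rw [edist_dist]
      refine ENNReal.ofReal_le_ofReal ?_
      rw [Real.dist_eq, abs_sub_comm, abs_of_nonneg (by simp at hx hy; linarith)]
      simp only [mem_Iic, mem_Ici] at hx hy
      linarith
    refine le_trans hdist ?_
    exact le_iSup_of_le (Iic a) (le_iSup_of_le (Ici b) (le_iSup_of_le measurableSet_Iic
      (le_iSup_of_le measurableSet_Ici (le_iSup_of_le ha2 (le_iSup_of_le hb2 le_rfl)))))
  calc partialDiam ν (2 * κ) ≤ EMetric.diam (Icc a b) :=
        le_trans (iInf_le _ (Icc a b)) (le_trans (iInf_le _ measurableSet_Icc)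
          (iInf_le _ hmeas))
    _ = ENNReal.ofReal (b - a) := Real.ediam_Icc a b
    _ ≤ sepDist ν κ κ := hsep

theorem stmt_3 (ν : Measure ℝ) [IsFiniteMeasure ν] (κ : ℝ≥0∞) (hκ : 0 < κ) :
    partialDiam ν (2 * κ) ≤ sepDist ν κ κ ∧
    ∀ (X : Type) [MetricSpace X] [CompleteSpace X] [TopologicalSpace.SeparableSpace X]
      [MeasurableSpace X] [BorelSpace X] (μ : Measure X) [IsFiniteMeasure μ],
      obsDiam ℝ μ (2 * κ) ≤ sepDist μ κ κ := by
  refine ⟨partialDiam_le_sepDist ν κ hκ, ?_⟩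
  intro X _ _ _ _ _ μ _
  refine iSup₂_le fun f hf => ?_
  have hfm : Measurable f := hf.continuous.measurable
  have hfin : IsFiniteMeasure (Measure.map f μ) :=
    ⟨by rw [Measure.map_apply hfm MeasurableSet.univ]; exact measure_lt_top μ _⟩
  refine le_trans (partialDiam_le_sepDist _ κ hκ) ?_
  refine iSup_le fun A => iSup_le fun B => iSup_le fun hA => iSup_le fun hB =>
    iSup_le fun hmA => iSup_le fun hmB => ?_
  have hdist : setEDist A B ≤ setEDist (f ⁻¹' A) (f ⁻¹' B) := by
    refine le_iInf₂ fun x hx => le_iInf₂ fun y hy => ?_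
    refine le_trans (setEDist_le_edist hx hy) ?_
    simpa using hf x y
  refine le_trans hdist ?_
  exact le_iSup_of_le (f ⁻¹' A) (le_iSup_of_le (f ⁻¹' B)
    (le_iSup_of_le (hA.preimage hfm) (le_iSup_of_le (hB.preimage hfm)
      (le_iSup_of_le (by rwa [← Measure.map_apply hfm hA])
        (le_iSup_of_le (by rwa [← Measure.map_apply hfm hB]) le_rfl)))))
end
end

section
/- Let a compact metric group G act continuously on a metric space X, let x ∈ X, and suppose ν_{G,x}(B_X(y, δ)) > 1/2 for some y ∈ X and δ > 0. Then d_X(y, gy) ≤ δ + ρ(δ) for every g ∈ G. Moreover, there exists a point x₀ in the orbit Gx such that d_X(x₀, gx₀) ≤ min{2δ + ρ(2δ), 2δ + 2ρ(δ)} for every g ∈ G. -/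
open MeasureTheory Metric Set Filter Topology ENNReal

noncomputable section

/-- `ρ(η)` for an action of `G` on `X`: the supremum of `d(gx, gy)` over `g ∈ G` and
`x, y ∈ X` with `d(x,y) ≤ η`. -/
def actRho (G X : Type*) [SMul G X] [PseudoEMetricSpace X] (η : ℝ≥0∞) : ℝ≥0∞ :=
  ⨆ (g : G) (x : X) (y : X) (_ : edist x y ≤ η), edist (g • x) (g • y)

/-- `ρ(+η) = lim_{η' ↓ η} ρ(η')`. -/
def actRhoPlus (G X : Type*) [SMul G X] [PseudoEMetricSpace X] (η : ℝ≥0∞) : ℝ≥0∞ :=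
  ⨅ (η' : ℝ≥0∞) (_ : η < η'), actRho G X η'

/-- `ω_x(η)`: the supremum of `d(gx, g'x)` over `g, g' ∈ G` with `d_G(g,g') ≤ η`. -/
def actOmega (G : Type*) {X : Type*} [PseudoEMetricSpace G] [SMul G X]
    [PseudoEMetricSpace X] (x : X) (η : ℝ≥0∞) : ℝ≥0∞ :=
  ⨆ (g : G) (g' : G) (_ : edist g g' ≤ η), edist (g • x) (g' • x)

/-- `ω_x(+η) = lim_{η' ↓ η} ω_x(η')`. -/
def actOmegaPlus (G : Type*) {X : Type*} [PseudoEMetricSpace G] [SMul G X]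
    [PseudoEMetricSpace X] (x : X) (η : ℝ≥0∞) : ℝ≥0∞ :=
  ⨅ (η' : ℝ≥0∞) (_ : η < η'), actOmega G x η'

theorem stmt_5 {G : Type*} [Group G] [MetricSpace G] [CompactSpace G] [IsTopologicalGroup G]
    [MeasurableSpace G] [BorelSpace G]
    {X : Type*} [MetricSpace X] [MeasurableSpace X] [BorelSpace X]
    [MulAction G X] [ContinuousSMul G X]
    (μG : Measure G) [μG.IsHaarMeasure] [IsProbabilityMeasure μG]
    (x y : X) (δ : ℝ≥0∞) (hδ : 0 < δ)
    (h : (2 : ℝ≥0∞)⁻¹ < (Measure.map (· • x) μG) (EMetric.ball y δ)) :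
    (∀ g : G, edist y (g • y) ≤ δ + actRho G X δ) ∧
    ∃ x₀ ∈ MulAction.orbit G x, ∀ g : G,
      edist x₀ (g • x₀) ≤
        min (2 * δ + actRho G X (2 * δ)) (2 * δ + 2 * actRho G X δ) := by
  have hc : Continuous (fun g : G => g • x) := continuous_id.smul continuous_const
  have hmeas : Measurable (fun g : G => g • x) := hc.measurable
  set A : Set G := (fun g : G => g • x) ⁻¹' (EMetric.ball y δ) with hA
  have hAmeas : MeasurableSet A := (EMetric.isOpen_ball.preimage hc).measurableSet
  have hAμ : (2:ℝ≥0∞)⁻¹ < μG A := by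
    rwa [Measure.map_apply hmeas (s := EMetric.ball y δ) EMetric.isOpen_ball.measurableSet] at h
  have rho_le : ∀ (g : G) (a b : X) (η : ℝ≥0∞), edist a b ≤ η →
      edist (g • a) (g • b) ≤ actRho G X η := by
    intro g a b η hab
    exact le_iSup_of_le g (le_iSup_of_le a (le_iSup_of_le b (le_iSup_of_le hab le_rfl)))
  have key : ∀ g : G, ∃ h : G, h ∈ A ∧ g⁻¹ * h ∈ A := by
    intro g
    set B : Set G := (fun h : G => g⁻¹ * h) ⁻¹' A with hB
    have hBmeas : MeasurableSet B := hAmeas.preimage (measurable_const_mul _)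
    have hBμ : (2:ℝ≥0∞)⁻¹ < μG B := by
      rw [hB, measure_preimage_mul]; exact hAμ
    by_contra hcon
    push_neg at hcon
    have hdisj : Disjoint A B := by
      rw [Set.disjoint_left]; intro a ha hb; exact hcon a ha hb
    have hun : μG (A ∪ B) = μG A + μG B := measure_union hdisj hBmeas
    have hlt : (1:ℝ≥0∞) < μG A + μG B := by
      calc (1:ℝ≥0∞) = 2⁻¹ + 2⁻¹ := by
            rw [ENNReal.inv_two_add_inv_two]
        _ < μG A + μG B := ENNReal.add_lt_add hAμ hBμ
    have hle : μG (A ∪ B) ≤ 1 := prob_le_one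
    rw [hun] at hle
    exact absurd hle (not_le.mpr hlt)
  have part1 : ∀ g : G, edist y (g • y) ≤ δ + actRho G X δ := by
    intro g
    obtain ⟨h, hh1, hh2⟩ := key g
    have e1 : edist (h • x) y < δ := hh1
    have e2 : edist ((g⁻¹ * h) • x) y < δ := hh2
    have hx_eq : h • x = g • ((g⁻¹ * h) • x) := by
      rw [smul_smul, mul_inv_cancel_left]
    calc edist y (g • y) ≤ edist y (h • x) + edist (h • x) (g • y) :=
          edist_triangle _ _ _
      _ ≤ δ + actRho G X δ := by
          apply add_le_add
          · rw [edist_comm]; exact e1.le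
          · rw [hx_eq]; exact rho_le g _ y δ e2.le
  refine ⟨part1, ?_⟩
  have hA0 : μG A ≠ 0 := by
    intro h0; rw [h0] at hAμ; simp at hAμ
  obtain ⟨h₀, hh₀⟩ := nonempty_of_measure_ne_zero hA0
  have e0 : edist (h₀ • x) y < δ := hh₀
  refine ⟨h₀ • x, ⟨h₀, rfl⟩, ?_⟩
  intro g
  apply le_min
  · obtain ⟨h, hh1, hh2⟩ := key g
    have e1 : edist (h • x) y < δ := hh1
    have e2 : edist ((g⁻¹ * h) • x) y < δ := hh2
    have hx_eq : h • x = g • ((g⁻¹ * h) • x) := by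
      rw [smul_smul, mul_inv_cancel_left]
    have d1 : edist (h₀ • x) (h • x) ≤ 2 * δ := by
      calc edist (h₀ • x) (h • x) ≤ edist (h₀ • x) y + edist y (h • x) :=
            edist_triangle _ _ _
        _ ≤ δ + δ := add_le_add e0.le (by rw [edist_comm]; exact e1.le)
        _ = 2 * δ := (two_mul δ).symm
    have d2 : edist ((g⁻¹ * h) • x) (h₀ • x) ≤ 2 * δ := by
      calc edist ((g⁻¹ * h) • x) (h₀ • x)
            ≤ edist ((g⁻¹ * h) • x) y + edist y (h₀ • x) := edist_triangle _ _ _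
        _ ≤ δ + δ := add_le_add e2.le (by rw [edist_comm]; exact e0.le)
        _ = 2 * δ := (two_mul δ).symm
    calc edist (h₀ • x) (g • (h₀ • x))
          ≤ edist (h₀ • x) (h • x) + edist (h • x) (g • (h₀ • x)) :=
            edist_triangle _ _ _
      _ ≤ 2 * δ + actRho G X (2 * δ) := by
          apply add_le_add d1
          rw [hx_eq]; exact rho_le g _ _ _ d2
  · calc edist (h₀ • x) (g • (h₀ • x))
        ≤ edist (h₀ • x) y + (edist y (g • y) + edist (g • y) (g • (h₀ • x))) := by
          calc edist (h₀ • x) (g • (h₀ • x))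
              ≤ edist (h₀ • x) y + edist y (g • (h₀ • x)) := edist_triangle _ _ _
            _ ≤ _ := by
                gcongr
                exact edist_triangle _ _ _
      _ ≤ δ + ((δ + actRho G X δ) + actRho G X δ) := by
          refine add_le_add e0.le (add_le_add (part1 g) ?_)
          have : edist y (h₀ • x) ≤ δ := by rw [edist_comm]; exact e0.le
          exact rho_le g _ _ _ this
      _ = 2 * δ + 2 * actRho G X δ := by ring
end
end

section
/- Let a compact metric group G act continuously on a metric space X and let x ∈ X. Set D := lim_{κ↑1/2} diam(ν_{G,x}, 1 − κ). Then there exists a point z_x in the orbit Gx such that d_X(z_x, g z_x) ≤ D + ρ(+D) for every g ∈ G. -/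
open MeasureTheory Metric Set Filter Topology ENNReal

noncomputable section

lemma actRho_mono (G X : Type*) [SMul G X] [PseudoEMetricSpace X] {a b : ℝ≥0∞} (h : a ≤ b) :
    actRho G X a ≤ actRho G X b := by
  refine iSup_le fun g => iSup_le fun u => iSup_le fun v => iSup_le fun huv => ?_
  exact le_iSup_of_le g <| le_iSup_of_le u <| le_iSup_of_le v <| le_iSup_of_le (huv.trans h) le_rfl

theorem stmt_7 {G : Type*} [Group G] [MetricSpace G] [CompactSpace G] [IsTopologicalGroup G]
    [MeasurableSpace G] [BorelSpace G]
    {X : Type*} [MetricSpace X] [MeasurableSpace X] [BorelSpace X]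
    [MulAction G X] [ContinuousSMul G X]
    (μG : Measure G) [μG.IsHaarMeasure] [IsProbabilityMeasure μG]
    (x : X)
    (D : ℝ≥0∞)
    (hD : D = ⨅ (κ : ℝ≥0∞) (_ : κ < (2 : ℝ≥0∞)⁻¹),
      partialDiam (Measure.map (· • x) μG) κ) :
    ∃ z ∈ MulAction.orbit G x, ∀ g : G,
      edist z (g • z) ≤ D + actRhoPlus G X D := by
  by_cases hDtop : D = ∞
  · exact ⟨x, MulAction.mem_orbit_self x, fun g => by simp [hDtop]⟩
  have hcont : Continuous (· • x : G → X) := continuous_id.smul continuous_const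
  have hmeas : Measurable (· • x : G → X) := hcont.measurable
  set ν := Measure.map (· • x) μG with hν
  have : IsProbabilityMeasure ν := Measure.isProbabilityMeasure_map hmeas.aemeasurable
  -- step 1: choose sets A n
  have key : ∀ n : ℕ, ∃ A : Set X, MeasurableSet A ∧ (2:ℝ≥0∞)⁻¹ < ν A ∧
      EMetric.diam A ≤ D + ((n:ℝ≥0∞))⁻¹ := by
    intro n
    have hlt : (⨅ (κ : ℝ≥0∞) (_ : κ < (2:ℝ≥0∞)⁻¹), partialDiam ν κ) < D + ((n:ℝ≥0∞))⁻¹ := by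
      rw [← hD]
      refine ENNReal.lt_add_right hDtop ?_
      simp [ENNReal.inv_ne_zero]
    obtain ⟨κ, hκ⟩ := iInf_lt_iff.1 hlt
    obtain ⟨hκhalf, hκlt⟩ := iInf_lt_iff.1 hκ
    rw [partialDiam] at hκlt
    obtain ⟨A, hA⟩ := iInf_lt_iff.1 hκlt
    obtain ⟨hAm, hA2⟩ := iInf_lt_iff.1 hA
    obtain ⟨hAν, hAd⟩ := iInf_lt_iff.1 hA2
    refine ⟨A, hAm, ?_, hAd.le⟩
    have h1 : ν univ = 1 := measure_univ
    rw [h1] at hAν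
    refine lt_of_lt_of_le ?_ hAν
    rw [(ENNReal.cancel_of_ne (hκhalf.trans (by norm_num)).ne).lt_tsub_iff_right]
    calc (2:ℝ≥0∞)⁻¹ + κ < 2⁻¹ + 2⁻¹ := by
          exact ENNReal.add_lt_add_left (by simp) hκhalf
      _ = 1 := ENNReal.inv_two_add_inv_two
  choose A hAm hAν hAd using key
  set B : ℕ → Set G := fun n => (· • x) ⁻¹' A n with hB
  have hBm : ∀ n, MeasurableSet (B n) := fun n => hmeas (hAm n)
  have hBν : ∀ n, (2:ℝ≥0∞)⁻¹ < μG (B n) := by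
    intro n
    have := hAν n
    rwa [hν, Measure.map_apply hmeas (hAm n)] at this
  have hBne : ∀ n, (B n).Nonempty := fun n =>
    nonempty_of_measure_ne_zero (lt_of_le_of_lt zero_le (hBν n)).ne'
  choose h hh using hBne
  obtain ⟨h₀, -, φ, hφ, hlim⟩ := isCompact_univ.tendsto_subseq (fun n => mem_univ (h n))
  refine ⟨h₀ • x, ⟨h₀, rfl⟩, fun g => ?_⟩
  -- key per-n estimate
  have step : ∀ (η' : ℝ≥0∞) (n : ℕ), D + ((n:ℝ≥0∞))⁻¹ ≤ η' →
      edist (h n • x) (g • (h n • x)) ≤ η' + actRho G X η' := by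
    intro η' n hn
    have hdiam : EMetric.diam (A n) ≤ η' := (hAd n).trans hn
    -- find k with k•x ∈ A n and g•(k•x) ∈ A n
    have hTm : MeasurableSet ((fun k => g * k) ⁻¹' B n) :=
      (measurable_const_mul g) (hBm n)
    have hTν : μG ((fun k => g * k) ⁻¹' B n) = μG (B n) := measure_preimage_mul μG g (B n)
    have hne : (B n ∩ (fun k => g * k) ⁻¹' B n).Nonempty := by
      by_contra hemp
      rw [not_nonempty_iff_eq_empty] at hemp
      have hdisj : Disjoint (B n) ((fun k => g * k) ⁻¹' B n) :=
        disjoint_iff_inter_eq_empty.2 hemp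
      have hu : μG (B n ∪ (fun k => g * k) ⁻¹' B n) = μG (B n) + μG ((fun k => g * k) ⁻¹' B n) :=
        measure_union hdisj hTm
      have h1 : (1:ℝ≥0∞) < μG (B n) + μG ((fun k => g * k) ⁻¹' B n) := by
        rw [hTν, ← ENNReal.inv_two_add_inv_two]
        exact ENNReal.add_lt_add (hBν n) (hBν n)
      rw [← hu] at h1
      exact absurd (prob_le_one (μ := μG)) (not_le.2 h1)
    obtain ⟨k, hk1, hk2⟩ := hne
    have hhA : h n • x ∈ A n := hh n
    have hk1' : k • x ∈ A n := hk1
    have hk2' : g • (k • x) ∈ A n := by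
      have : (g * k) • x ∈ A n := hk2
      rwa [mul_smul] at this
    calc edist (h n • x) (g • (h n • x))
        ≤ edist (h n • x) (g • (k • x)) + edist (g • (k • x)) (g • (h n • x)) :=
          edist_triangle _ _ _
      _ ≤ η' + actRho G X η' := by
          refine add_le_add ?_ ?_
          · exact (EMetric.edist_le_diam_of_mem hhA hk2').trans hdiam
          · refine le_iSup_of_le g <| le_iSup_of_le (k • x) <| le_iSup_of_le (h n • x) <|
              le_iSup_of_le ?_ le_rfl
            exact (EMetric.edist_le_diam_of_mem hk1' hhA).trans hdiam
  -- pass to the limit along the subsequence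
  have hzlim : Tendsto (fun m => edist (h (φ m) • x) (g • (h (φ m) • x))) atTop
      (𝓝 (edist (h₀ • x) (g • (h₀ • x)))) := by
    have t1 : Tendsto (fun m => h (φ m) • x) atTop (𝓝 (h₀ • x)) := hcont.continuousAt.tendsto.comp hlim
    have t2 : Tendsto (fun m => g • (h (φ m) • x)) atTop (𝓝 (g • (h₀ • x))) :=
      ((continuous_const_smul g).continuousAt.tendsto (x := h₀ • x)).comp t1
    exact t1.edist t2
  have main : ∀ η', D < η' → edist (h₀ • x) (g • (h₀ • x)) ≤ η' + actRho G X η' := by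
    intro η' hη'
    refine le_of_tendsto hzlim ?_
    have hev : ∀ᶠ n : ℕ in atTop, D + ((n:ℝ≥0∞))⁻¹ ≤ η' := by
      have ht : Tendsto (fun n : ℕ => D + ((n:ℝ≥0∞))⁻¹) atTop (𝓝 D) := by
        simpa using (ENNReal.tendsto_inv_nat_nhds_zero.const_add D)
      exact (ht.eventually_lt_const hη').mono fun n hn => hn.le
    exact (hφ.tendsto_atTop.eventually hev).mono fun m hm => step η' (φ m) hm
  -- conclude
  refine ENNReal.le_of_forall_pos_le_add fun ε hε hfin => ?_
  have hrfin : actRhoPlus G X D < ∞ := lt_of_le_of_lt le_add_self hfin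
  have hε2 : ((ε:ℝ≥0∞)/2) ≠ 0 := by
    simp [ENNReal.div_eq_zero_iff, (ENNReal.coe_pos.2 hε).ne']
  have hlt : actRhoPlus G X D < actRhoPlus G X D + (ε:ℝ≥0∞)/2 :=
    ENNReal.lt_add_right hrfin.ne hε2
  obtain ⟨η₁, hη₁⟩ := iInf_lt_iff.1 (hlt.trans_le' le_rfl)
  obtain ⟨hη₁D, hη₁ρ⟩ := iInf_lt_iff.1 hη₁
  set η₂ := min η₁ (D + (ε:ℝ≥0∞)/2) with hη₂def
  have hη₂D : D < η₂ := lt_min hη₁D (ENNReal.lt_add_right hDtop hε2)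
  calc edist (h₀ • x) (g • (h₀ • x)) ≤ η₂ + actRho G X η₂ := main η₂ hη₂D
    _ ≤ (D + (ε:ℝ≥0∞)/2) + (actRhoPlus G X D + (ε:ℝ≥0∞)/2) :=
        add_le_add (min_le_right _ _) ((actRho_mono G X (min_le_left _ _)).trans hη₁ρ.le)
    _ = D + actRhoPlus G X D + ε := by
        rw [add_add_add_comm, ENNReal.add_halves]
end
end

section
/- Let a compact metric group G act continuously on a metric space X and let x ∈ X. Then for all κ₁, κ₂ > 0, Sep(ν_{G,x}; κ₁, κ₂) ≤ ω_x(+Sep(G; κ₁, κ₂)). -/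
open MeasureTheory Metric Set Filter Topology ENNReal

noncomputable section

theorem stmt_8 {G : Type*} [Group G] [MetricSpace G] [CompactSpace G] [IsTopologicalGroup G]
    [MeasurableSpace G] [BorelSpace G]
    {X : Type*} [MetricSpace X] [MeasurableSpace X] [BorelSpace X]
    [MulAction G X] [ContinuousSMul G X]
    (μG : Measure G) [μG.IsHaarMeasure] [IsProbabilityMeasure μG]
    (x : X) (κ₁ κ₂ : ℝ≥0∞) (hκ₁ : 0 < κ₁) (hκ₂ : 0 < κ₂) :
    sepDist (Measure.map (· • x) μG) κ₁ κ₂ ≤ actOmegaPlus G x (sepDist μG κ₁ κ₂) := by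
  rw [actOmegaPlus, le_iInf_iff]
  intro η'
  rw [le_iInf_iff]
  intro hη'
  rw [sepDist]
  simp only [iSup_le_iff]
  intro A B hA hB h1 h2
  set f : G → X := (· • x) with hf_def
  have hf : Continuous f := continuous_id.smul continuous_const
  have hAm : MeasurableSet (f ⁻¹' A) := hf.measurable hA
  have hBm : MeasurableSet (f ⁻¹' B) := hf.measurable hB
  have h1' : κ₁ ≤ μG (f ⁻¹' A) := by
    rw [← Measure.map_apply hf.measurable hA]; exact h1
  have h2' : κ₂ ≤ μG (f ⁻¹' B) := by
    rw [← Measure.map_apply hf.measurable hB]; exact h2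
  have hsep : setEDist (f ⁻¹' A) (f ⁻¹' B) ≤ sepDist μG κ₁ κ₂ := by
    rw [sepDist]
    exact le_iSup_of_le (f ⁻¹' A) <| le_iSup_of_le (f ⁻¹' B) <|
      le_iSup_of_le hAm <| le_iSup_of_le hBm <|
      le_iSup_of_le h1' <| le_iSup_of_le h2' le_rfl
  have hlt : setEDist (f ⁻¹' A) (f ⁻¹' B) < η' := lt_of_le_of_lt hsep hη'
  rw [setEDist] at hlt
  simp only [iInf_lt_iff] at hlt
  obtain ⟨g, hg, g', hg', hgg'⟩ := hlt
  have hω : edist (g • x) (g' • x) ≤ actOmega G x η' :=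
    le_iSup_of_le g <| le_iSup_of_le g' <| le_iSup_of_le hgg'.le le_rfl
  refine le_trans ?_ hω
  rw [setEDist]
  exact iInf_le_of_le (g • x) <| iInf_le_of_le hg <|
    iInf_le_of_le (g' • x) <| iInf_le_of_le hg' le_rfl
end
end

section
/- Let {G_n} be a sequence of compact metric groups which is a Lévy family (with respect to their normalized Haar measures), and suppose each G_n acts continuously on a metric space X. Assume there exist a sequence {x_n} of points in X and a function ω : (0, ∞) → [0, ∞] such that lim_{η→0} ω(η) = 0 and ω_{x_n}^{(G_n, X)}(η) ≤ ω(η) for all n ∈ ℕ and η > 0. Then the sequence {(X, d_X, ν_{G_n, x_n})} of mm-spaces is a Lévy family. -/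
open MeasureTheory Metric Set Filter Topology ENNReal

noncomputable section

lemma exists_median {G : Type} [Nonempty G] [TopologicalSpace G] [CompactSpace G]
    [MeasurableSpace G] [OpensMeasurableSpace G]
    (μ : Measure G) [IsProbabilityMeasure μ] {h : G → ℝ} (hh : Continuous h) :
    ∃ m : ℝ, 1/2 ≤ μ {g | h g ≤ m} ∧ 1/2 ≤ μ {g | m ≤ h g} := by
  obtain ⟨gmax, -, hgmax⟩ := isCompact_univ.exists_isMaxOn univ_nonempty hh.continuousOn
  obtain ⟨gmin, -, hgmin⟩ := isCompact_univ.exists_isMinOn univ_nonempty hh.continuousOn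
  set S : Set ℝ := {t | 1/2 ≤ μ {g | h g ≤ t}} with hS
  have hSne : (h gmax) ∈ S := by
    have : {g | h g ≤ h gmax} = univ := eq_univ_of_forall fun g => hgmax (mem_univ g)
    simp [hS, this]
  have hSbdd : BddBelow S := by
    refine ⟨h gmin, fun t ht => ?_⟩
    by_contra hlt
    push_neg at hlt
    have : {g | h g ≤ t} = ∅ := by
      ext g; simp only [mem_setOf_eq, mem_empty_iff_false, iff_false, not_le]
      exact lt_of_lt_of_le hlt (hgmin (mem_univ g))
    rw [hS] at ht
    simp only [mem_setOf_eq, this, measure_empty] at ht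
    simp at ht
  set m := sInf S with hm
  have hmeas : ∀ t : ℝ, MeasurableSet {g | h g ≤ t} := fun t =>
    (isClosed_le hh continuous_const).measurableSet
  refine ⟨m, ?_, ?_⟩
  · -- continuity from above on {h ≤ m + 1/(n+1)}
    have key : ∀ t : ℝ, m < t → 1/2 ≤ μ {g | h g ≤ t} := by
      intro t ht
      obtain ⟨s, hsS, hst⟩ := (csInf_lt_iff hSbdd ⟨_, hSne⟩).1 ht
      exact le_trans hsS (measure_mono fun g hg => le_trans hg hst.le)
    have hInter : {g | h g ≤ m} = ⋂ n : ℕ, {g | h g ≤ m + 1/(n+1)} := by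
      ext g
      simp only [mem_setOf_eq, mem_iInter]
      constructor
      · intro hg n
        have : (0:ℝ) < 1/(n+1) := by positivity
        linarith
      · intro hg
        by_contra hlt
        push_neg at hlt
        obtain ⟨n, hn⟩ := exists_nat_one_div_lt (sub_pos.2 hlt)
        have := hg n
        linarith
    have htend := tendsto_measure_iInter_atTop (μ := μ)
      (s := fun n : ℕ => {g | h g ≤ m + 1/(n+1)})
      (fun n => (hmeas _).nullMeasurableSet)
      (fun a b hab => by
        intro g hg
        simp only [mem_setOf_eq] at hg ⊢
        have hba : (a:ℝ) + 1 ≤ (b:ℝ) + 1 := by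
          have := (Nat.cast_le (α := ℝ)).2 hab
          linarith
        have : (1:ℝ)/(b+1) ≤ 1/(a+1) := one_div_le_one_div_of_le (by positivity) hba
        linarith)
      ⟨0, measure_ne_top μ _⟩
    rw [hInter]
    refine ge_of_tendsto htend (Eventually.of_forall fun n => ?_)
    exact key _ (by simp only [lt_add_iff_pos_right]; positivity)
  · have key : ∀ t : ℝ, t < m → 1/2 ≤ μ {g | t < h g} := by
      intro t ht
      have htS : t ∉ S := fun hmem => absurd (csInf_le hSbdd hmem) (not_le.2 ht)
      rw [hS, mem_setOf_eq, not_le] at htS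
      have hc : {g | t < h g} = {g | h g ≤ t}ᶜ := by
        ext g; simp [not_le]
      rw [hc, measure_compl (hmeas t) (measure_ne_top μ _), measure_univ]
      calc (1:ℝ≥0∞)/2 = 1 - 1/2 := by rw [ENNReal.sub_half one_ne_top]
        _ ≤ 1 - μ {g | h g ≤ t} := tsub_le_tsub_left htS.le 1
    have hInter : {g | m ≤ h g} = ⋂ n : ℕ, {g | m - 1/(n+1) < h g} := by
      ext g
      simp only [mem_setOf_eq, mem_iInter]
      constructor
      · intro hg n
        have : (0:ℝ) < 1/(n+1) := by positivity
        linarith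
      · intro hg
        by_contra hlt
        push_neg at hlt
        obtain ⟨n, hn⟩ := exists_nat_one_div_lt (sub_pos.2 hlt)
        have := hg n
        linarith
    have htend := tendsto_measure_iInter_atTop (μ := μ)
      (s := fun n : ℕ => {g | m - 1/(n+1) < h g})
      (fun n => ((isOpen_lt continuous_const hh).measurableSet).nullMeasurableSet)
      (fun a b hab => by
        intro g hg
        simp only [mem_setOf_eq] at hg ⊢
        have hba : (a:ℝ) + 1 ≤ (b:ℝ) + 1 := by
          have := (Nat.cast_le (α := ℝ)).2 hab
          linarith
        have : (1:ℝ)/(b+1) ≤ 1/(a+1) := one_div_le_one_div_of_le (by positivity) hba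
        linarith)
      ⟨0, measure_ne_top μ _⟩
    rw [hInter]
    refine ge_of_tendsto htend (Eventually.of_forall fun n => ?_)
    exact key _ (by simp only [sub_lt_self_iff]; positivity)

lemma conc_step {G : Type} [MetricSpace G] [MeasurableSpace G] [BorelSpace G]
    (μ : Measure G) [IsProbabilityMeasure μ] {κ₀ η : ℝ≥0∞}
    (hκ : κ₀ ≤ 1/4) (hη : η ≠ ⊤) (hobs : obsDiam ℝ μ κ₀ < η)
    {A : Set G} (hA : IsClosed A) (hμA : 1/2 ≤ μ A) :
    ∃ T : Set G, MeasurableSet T ∧ 1 - κ₀ ≤ μ T ∧ ∀ g ∈ T, ∃ a ∈ A, edist g a ≤ η := by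
  have hAne : A.Nonempty := by
    rcases eq_empty_or_nonempty A with rfl | h
    · simp at hμA
    · exact h
  set u : G → ℝ := fun g => infDist g A with hu
  have hulip : LipschitzWith 1 u := lipschitz_infDist_pt A
  have humeas : Measurable u := hulip.continuous.measurable
  have hple : partialDiam (Measure.map u μ) κ₀ < η :=
    lt_of_le_of_lt (le_iSup_of_le u (le_iSup (fun _ : LipschitzWith 1 u => partialDiam (Measure.map u μ) κ₀) hulip)) hobs
  rw [partialDiam] at hple
  simp only [iInf_lt_iff] at hple
  obtain ⟨S, hSmeas, hSμ, hSdiam⟩ := hple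
  rw [Measure.map_apply humeas MeasurableSet.univ, preimage_univ, measure_univ,
    Measure.map_apply humeas hSmeas] at hSμ
  refine ⟨u ⁻¹' S, humeas hSmeas, hSμ, ?_⟩
  -- A ∩ u⁻¹' S nonempty
  have hint : (A ∩ u ⁻¹' S).Nonempty := by
    by_contra hcon
    rw [not_nonempty_iff_eq_empty] at hcon
    have hdisj : Disjoint A (u ⁻¹' S) := disjoint_iff_inter_eq_empty.2 hcon
    have := measure_union (μ := μ) hdisj (humeas hSmeas)
    have hle : μ (A ∪ u ⁻¹' S) ≤ 1 := prob_le_one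
    rw [this] at hle
    have h341 : (3:ℝ≥0∞)/4 + 1/4 = 1 := by
      rw [ENNReal.div_add_div_same]
      norm_num
      exact ENNReal.div_self (by norm_num) (by norm_num)
    have h34 : (3:ℝ≥0∞)/4 ≤ μ (u ⁻¹' S) := by
      refine le_trans ?_ hSμ
      calc (3:ℝ≥0∞)/4 = 1 - 1/4 :=
            ENNReal.eq_sub_of_add_eq (by norm_num) h341
        _ ≤ 1 - κ₀ := tsub_le_tsub_left hκ 1
    have hcontr : (1:ℝ≥0∞)/2 + 3/4 ≤ 1 := le_trans (add_le_add hμA h34) hle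
    have hcontr2 : (3:ℝ≥0∞)/4 ≤ 1 - 1/2 :=
      ENNReal.le_sub_of_add_le_left (by norm_num) hcontr
    rw [ENNReal.sub_half one_ne_top] at hcontr2
    have h12 : ((3:ℝ≥0∞)/4).toReal ≤ ((1:ℝ≥0∞)/2).toReal :=
      ENNReal.toReal_mono (by norm_num) hcontr2
    simp [ENNReal.toReal_div] at h12
    norm_num at h12
  obtain ⟨a₀, ha₀A, ha₀S⟩ := hint
  have h0S : (0:ℝ) ∈ S := by
    have : u a₀ = 0 := infDist_zero_of_mem ha₀A
    rwa [← this]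
  intro g hg
  have hle : edist (u g) (0:ℝ) < η :=
    lt_of_le_of_lt (EMetric.edist_le_diam_of_mem hg h0S) hSdiam
  have hug : ENNReal.ofReal (u g) < η := by
    rwa [edist_dist, Real.dist_0_eq_abs, abs_of_nonneg infDist_nonneg] at hle
  have : u g < η.toReal := by
    rw [← ENNReal.ofReal_lt_iff_lt_toReal infDist_nonneg hη] at *
    exact hug
  obtain ⟨a, haA, hda⟩ := (infDist_lt_iff hAne).1 this
  exact ⟨a, haA, by
    rw [edist_dist]
    calc ENNReal.ofReal (dist g a) ≤ ENNReal.ofReal η.toReal := ENNReal.ofReal_le_ofReal hda.le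
      _ = η := ENNReal.ofReal_toReal hη⟩

lemma abs_sub_median {u p q v : ℝ} (hp : p ≤ v) (hq : v ≤ q) :
    |u - v| ≤ max |u - p| |u - q| := by
  rcases le_total u v with hu | hu
  · rw [abs_sub_comm u v, abs_of_nonneg (by linarith)]
    refine le_max_of_le_right ?_
    rw [abs_sub_comm, abs_of_nonneg (by linarith)]; linarith
  · rw [abs_of_nonneg (by linarith)]
    refine le_max_of_le_left ?_
    rw [abs_of_nonneg (by linarith)]; linarith

theorem stmt_9 (G : ℕ → Type) [∀ n, Group (G n)] [∀ n, MetricSpace (G n)]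
    [∀ n, CompactSpace (G n)] [∀ n, IsTopologicalGroup (G n)]
    [∀ n, MeasurableSpace (G n)] [∀ n, BorelSpace (G n)]
    (μ : ∀ n, Measure (G n)) (hHaar : ∀ n, (μ n).IsHaarMeasure)
    (hprob : ∀ n, IsProbabilityMeasure (μ n))
    (hLevy : IsLevyFamily G μ)
    {X : Type} [MetricSpace X] [CompleteSpace X] [TopologicalSpace.SeparableSpace X]
    [MeasurableSpace X] [BorelSpace X]
    [∀ n, MulAction (G n) X] [∀ n, ContinuousSMul (G n) X]
    (x : ℕ → X) (ω : ℝ≥0∞ → ℝ≥0∞)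
    (hω0 : Tendsto ω (nhdsWithin 0 (Ioi 0)) (nhds 0))
    (hωbound : ∀ n, ∀ η : ℝ≥0∞, 0 < η → actOmega (G n) (x n) η ≤ ω η) :
    IsLevyFamily (fun _ => X) (fun n => Measure.map (· • x n) (μ n)) := by
  intro κ hκ
  rw [ENNReal.tendsto_atTop_zero]
  intro ε hε
  rcases eq_or_ne ε ⊤ with rfl | hεtop
  · exact ⟨0, fun n _ => le_top⟩
  set ε2 := ε / 2 with hε2def
  have hε2pos : 0 < ε2 := ENNReal.div_pos hε.ne' (by norm_num)
  -- choose η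
  have hev : ∀ᶠ η in 𝓝[>] (0:ℝ≥0∞), ω η < ε2 := (tendsto_order.1 hω0).2 ε2 hε2pos
  have hIoo : Ioo (0:ℝ≥0∞) 1 ∈ 𝓝[>] (0:ℝ≥0∞) :=
    Ioo_mem_nhdsGT_of_mem ⟨le_refl 0, zero_lt_one⟩
  haveI : (𝓝[>] (0:ℝ≥0∞)).NeBot := nhdsGT_neBot_of_exists_gt ⟨1, zero_lt_one⟩
  obtain ⟨η, hηω, hη0, hη1⟩ : ∃ η : ℝ≥0∞, ω η < ε2 ∧ 0 < η ∧ η < 1 := by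
    rcases (hev.and (eventually_of_mem hIoo fun y hy => hy)).exists with ⟨η, h1, h2⟩
    exact ⟨η, h1, h2.1, h2.2⟩
  have hηtop : η ≠ ⊤ := (hη1.trans ENNReal.one_lt_top).ne
  set κ₀ := min (κ / 2) (1 / 4) with hκ₀def
  have hκ₀pos : 0 < κ₀ :=
    lt_min (ENNReal.div_pos hκ.ne' (by norm_num)) (ENNReal.div_pos one_ne_zero (by norm_num))
  have hκ₀14 : κ₀ ≤ 1 / 4 := min_le_right _ _
  have hκ₀1 : κ₀ ≤ 1 := hκ₀14.trans (ENNReal.div_le_of_le_mul (by norm_num))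
  have hobs_ev : ∀ᶠ n in atTop, obsDiam ℝ (μ n) κ₀ < η :=
    (tendsto_order.1 (hLevy κ₀ hκ₀pos)).2 η hη0
  rw [eventually_atTop] at hobs_ev
  obtain ⟨N, hN⟩ := hobs_ev
  refine ⟨N, fun n hn => ?_⟩
  haveI := hprob n
  have hobsn := hN n hn
  have horb : Continuous (fun g : G n => g • x n) := continuous_id.smul continuous_const
  simp only []
  rw [obsDiam]
  refine iSup_le fun f => iSup_le fun hf => ?_
  set h : G n → ℝ := fun g => f (g • x n) with hhdef
  have hhcont : Continuous h := hf.continuous.comp horb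
  rw [Measure.map_map hf.continuous.measurable horb.measurable]
  obtain ⟨m, hmA, hmB⟩ := exists_median (μ n) hhcont
  set A := {g : G n | h g ≤ m} with hAdef
  set B := {g : G n | m ≤ h g} with hBdef
  obtain ⟨TA, hTAm, hTAμ, hTA⟩ :=
    conc_step (μ n) hκ₀14 hηtop hobsn (isClosed_le hhcont continuous_const) hmA
  obtain ⟨TB, hTBm, hTBμ, hTB⟩ :=
    conc_step (μ n) hκ₀14 hηtop hobsn (isClosed_le continuous_const hhcont) hmB
  set C := TA ∩ TB with hCdef
  have hCm : MeasurableSet C := hTAm.inter hTBm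
  -- measure of C
  have hcompl_le : ∀ (T : Set (G n)), MeasurableSet T → 1 - κ₀ ≤ μ n T → μ n Tᶜ ≤ κ₀ := by
    intro T hTm hTμ
    rw [measure_compl hTm (measure_ne_top _ _), measure_univ]
    calc 1 - μ n T ≤ 1 - (1 - κ₀) := tsub_le_tsub_left hTμ 1
      _ ≤ κ₀ := by
          rw [tsub_le_iff_right, add_tsub_cancel_of_le hκ₀1]
  have hκ₀κ : κ₀ + κ₀ ≤ κ := by
    calc κ₀ + κ₀ ≤ κ / 2 + κ / 2 := add_le_add (min_le_left _ _) (min_le_left _ _)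
      _ = κ := ENNReal.add_halves κ
  have hCμ : 1 - κ ≤ μ n C := by
    have hCc : μ n Cᶜ ≤ κ := by
      rw [hCdef, compl_inter]
      calc μ n (TAᶜ ∪ TBᶜ) ≤ μ n TAᶜ + μ n TBᶜ := measure_union_le _ _
        _ ≤ κ₀ + κ₀ := add_le_add (hcompl_le TA hTAm hTAμ) (hcompl_le TB hTBm hTBμ)
        _ ≤ κ := hκ₀κ
    have h1 : (1:ℝ≥0∞) = μ n C + μ n Cᶜ := by
      rw [measure_add_measure_compl hCm, measure_univ]
    rw [tsub_le_iff_right, h1]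
    exact add_le_add_right hCc _
  -- the target ball
  set r := ω η with hrdef
  set SB := EMetric.closedBall (m : ℝ) r with hSBdef
  have hSBm : MeasurableSet SB := by
    have : Measurable (fun t : ℝ => edist t m) := (continuous_id.edist continuous_const).measurable
    exact measurableSet_le this measurable_const
  have hsub : C ⊆ h ⁻¹' SB := by
    rintro g ⟨hgTA, hgTB⟩
    obtain ⟨a, haA, hga⟩ := hTA g hgTA
    obtain ⟨b, hbB, hgb⟩ := hTB g hgTB
    have edist_bound : ∀ g' : G n, edist g g' ≤ η → edist (h g) (h g') ≤ r := by
      intro g' hgg'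
      calc edist (h g) (h g') ≤ edist (g • x n) (g' • x n) := by
            simpa using hf (g • x n) (g' • x n)
        _ ≤ actOmega (G n) (x n) η :=
            le_iSup_of_le g (le_iSup_of_le g'
              (le_iSup (fun _ : edist g g' ≤ η => edist (g • x n) (g' • x n)) hgg'))
        _ ≤ ω η := hωbound n η hη0
    have e1 : edist (h g) (h a) ≤ r := edist_bound a hga
    have e2 : edist (h g) (h b) ≤ r := edist_bound b hgb
    have key : |h g - m| ≤ max |h g - h a| |h g - h b| := abs_sub_median haA hbB
    show edist (h g) m ≤ r
    rcases le_max_iff.1 key with hk | hk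
    · calc edist (h g) m = ENNReal.ofReal |h g - m| := by rw [edist_dist, Real.dist_eq]
        _ ≤ ENNReal.ofReal |h g - h a| := ENNReal.ofReal_le_ofReal hk
        _ = edist (h g) (h a) := by rw [edist_dist, Real.dist_eq]
        _ ≤ r := e1
    · calc edist (h g) m = ENNReal.ofReal |h g - m| := by rw [edist_dist, Real.dist_eq]
        _ ≤ ENNReal.ofReal |h g - h b| := ENNReal.ofReal_le_ofReal hk
        _ = edist (h g) (h b) := by rw [edist_dist, Real.dist_eq]
        _ ≤ r := e2
  have hνS : (Measure.map h (μ n)) univ - κ ≤ (Measure.map h (μ n)) SB := by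
    rw [Measure.map_apply hhcont.measurable MeasurableSet.univ, preimage_univ, measure_univ,
      Measure.map_apply hhcont.measurable hSBm]
    exact le_trans hCμ (measure_mono hsub)
  calc partialDiam (Measure.map h (μ n)) κ ≤ EMetric.diam SB :=
        iInf_le_of_le SB (iInf_le_of_le hSBm (iInf_le_of_le hνS le_rfl))
    _ ≤ 2 * r := EMetric.diam_closedBall
    _ ≤ 2 * ε2 := mul_le_mul_right hηω.le 2
    _ = ε := ENNReal.mul_div_cancel' (by norm_num) (by norm_num)
end
end

section
/- Let ν be a finite Borel measure on the Euclidean space ℝ^k with m := ν(ℝ^k). Then for every κ > 0, diam(ν, m − κ) ≤ √k · max_{1≤i≤k} diam((pr_i)_*(ν), m − κ/k), where pr_i : ℝ^k → ℝ is the projection to the i-th coordinate. -/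
open MeasureTheory Metric Set Filter Topology ENNReal

noncomputable section

theorem stmt_10 (k : ℕ) (hk : 0 < k)
    (ν : Measure (EuclideanSpace ℝ (Fin k))) [IsFiniteMeasure ν]
    (κ : ℝ≥0∞) (hκ : 0 < κ) :
    partialDiam ν κ ≤ ENNReal.ofReal (Real.sqrt k) *
      ⨆ i : Fin k, partialDiam (Measure.map (fun x => x i) ν) (κ / k) := by
  have hsqrt : (0:ℝ) < Real.sqrt k := Real.sqrt_pos.mpr (by exact_mod_cast hk)
  set S := ⨆ i : Fin k, partialDiam (Measure.map (fun x => x i) ν) (κ / k) with hS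
  rcases eq_top_or_lt_top S with hStop | hSfin
  · rw [hStop, ENNReal.mul_top (ENNReal.ofReal_pos.mpr hsqrt).ne']
    exact le_top
  have hk0 : (k : ℝ≥0∞) ≠ 0 := Nat.cast_ne_zero.mpr hk.ne'
  have hmeas : ∀ i : Fin k, Measurable (fun x : EuclideanSpace ℝ (Fin k) => x i) :=
    fun i => (measurable_pi_apply i).comp (WithLp.measurable_ofLp 2 _)
  have key : ∀ ε : ℝ, 0 < ε →
      partialDiam ν κ ≤ ENNReal.ofReal (Real.sqrt k) * (S + ENNReal.ofReal ε) := by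
    intro ε hε
    have hchoice : ∀ i : Fin k, ∃ A : Set ℝ, MeasurableSet A ∧
        (Measure.map (fun x : EuclideanSpace ℝ (Fin k) => x i) ν) univ - κ / k ≤
          (Measure.map (fun x : EuclideanSpace ℝ (Fin k) => x i) ν) A ∧
        EMetric.diam A ≤ S + ENNReal.ofReal ε := by
      intro i
      have hDi : partialDiam (Measure.map (fun x : EuclideanSpace ℝ (Fin k) => x i) ν) (κ / k) ≤ S :=
        le_iSup (fun i : Fin k => partialDiam (Measure.map (fun x : EuclideanSpace ℝ (Fin k) => x i) ν) (κ / k)) i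
      have hlt : partialDiam (Measure.map (fun x : EuclideanSpace ℝ (Fin k) => x i) ν) (κ / k) <
          S + ENNReal.ofReal ε :=
        lt_of_le_of_lt hDi (ENNReal.lt_add_right hSfin.ne (ENNReal.ofReal_pos.mpr hε).ne')
      simp only [partialDiam, iInf_lt_iff] at hlt
      obtain ⟨A, hA1, hA2, hA3⟩ := hlt
      exact ⟨A, hA1, hA2, hA3.le⟩
    choose A hA1 hA2 hA3 using hchoice
    set t := S.toReal + ε with ht
    have ht0 : 0 ≤ t := add_nonneg ENNReal.toReal_nonneg hε.le
    have hSt : S + ENNReal.ofReal ε = ENNReal.ofReal t := by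
      rw [ht, ENNReal.ofReal_add ENNReal.toReal_nonneg hε.le, ENNReal.ofReal_toReal hSfin.ne]
    set B := ⋂ i, (fun x : EuclideanSpace ℝ (Fin k) => x i) ⁻¹' A i with hB
    have hBmeas : MeasurableSet B := MeasurableSet.iInter fun i => (hA1 i).preimage (hmeas i)
    have hcompl : ∀ i, ν ((fun x : EuclideanSpace ℝ (Fin k) => x i) ⁻¹' (A i)ᶜ) ≤ κ / k := by
      intro i
      have hmap : ν ((fun x : EuclideanSpace ℝ (Fin k) => x i) ⁻¹' (A i)ᶜ) =
          (Measure.map (fun x : EuclideanSpace ℝ (Fin k) => x i) ν) (A i)ᶜ :=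
        (Measure.map_apply (hmeas i) (hA1 i).compl).symm
      have hAfin : (Measure.map (fun x : EuclideanSpace ℝ (Fin k) => x i) ν) (A i) ≠ ∞ := by
        refine ne_top_of_le_ne_top ?_ (measure_mono (subset_univ _))
        rw [Measure.map_apply (hmeas i) MeasurableSet.univ]
        exact (measure_lt_top ν _).ne
      rw [hmap, measure_compl (hA1 i) hAfin]
      rw [tsub_le_iff_left]
      exact tsub_le_iff_right.mp (hA2 i)
    have hBcond : ν univ - κ ≤ ν B := by
      rw [tsub_le_iff_right]
      have hBc : ν Bᶜ ≤ κ := by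
        have : Bᶜ = ⋃ i, (fun x : EuclideanSpace ℝ (Fin k) => x i) ⁻¹' (A i)ᶜ := by
          simp [hB, compl_iInter, preimage_compl]
        rw [this]
        calc ν (⋃ i, (fun x : EuclideanSpace ℝ (Fin k) => x i) ⁻¹' (A i)ᶜ)
            ≤ ∑' i, ν ((fun x : EuclideanSpace ℝ (Fin k) => x i) ⁻¹' (A i)ᶜ) := measure_iUnion_le _
          _ ≤ ∑' _ : Fin k, κ / k := ENNReal.tsum_le_tsum hcompl
          _ = k * (κ / k) := by
              rw [tsum_fintype]
              simp [Finset.sum_const, nsmul_eq_mul]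
          _ = κ := ENNReal.mul_div_cancel hk0 (ENNReal.natCast_ne_top k)
      calc ν univ = ν (B ∪ Bᶜ) := by rw [union_compl_self]
        _ ≤ ν B + ν Bᶜ := measure_union_le _ _
        _ ≤ ν B + κ := add_le_add_right hBc _
    have hdiam : EMetric.diam B ≤ ENNReal.ofReal (Real.sqrt k * t) := by
      apply EMetric.diam_le
      intro x hx y hy
      rw [edist_dist]
      apply ENNReal.ofReal_le_ofReal
      have hcoord : ∀ i : Fin k, dist (x i) (y i) ≤ t := by
        intro i
        have hxi : x i ∈ A i := mem_iInter.mp hx i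
        have hyi : y i ∈ A i := mem_iInter.mp hy i
        have : edist (x i) (y i) ≤ ENNReal.ofReal t := by
          refine le_trans (EMetric.edist_le_diam_of_mem hxi hyi) ?_
          rw [← hSt]; exact hA3 i
        exact (edist_le_ofReal ht0).mp this
      rw [EuclideanSpace.dist_eq]
      have hsum : (∑ i, dist (x i) (y i) ^ 2) ≤ (k : ℝ) * t ^ 2 := by
        calc (∑ i, dist (x i) (y i) ^ 2) ≤ ∑ _i : Fin k, t ^ 2 :=
              Finset.sum_le_sum fun i _ => pow_le_pow_left₀ dist_nonneg (hcoord i) 2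
          _ = (k : ℝ) * t ^ 2 := by simp [Finset.sum_const, nsmul_eq_mul]
      calc Real.sqrt (∑ i, dist (x i) (y i) ^ 2) ≤ Real.sqrt ((k : ℝ) * t ^ 2) :=
            Real.sqrt_le_sqrt hsum
        _ = Real.sqrt k * t := by
            rw [Real.sqrt_mul (Nat.cast_nonneg k), Real.sqrt_sq ht0]
    calc partialDiam ν κ ≤ EMetric.diam B :=
          iInf_le_of_le B (iInf_le_of_le hBmeas (iInf_le _ hBcond))
      _ ≤ ENNReal.ofReal (Real.sqrt k * t) := hdiam
      _ = ENNReal.ofReal (Real.sqrt k) * ENNReal.ofReal t := ENNReal.ofReal_mul hsqrt.le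
      _ = ENNReal.ofReal (Real.sqrt k) * (S + ENNReal.ofReal ε) := by rw [hSt]
  apply ENNReal.le_of_forall_pos_le_add
  intro ε' hε' _
  have hkey := key ((ε' : ℝ) / Real.sqrt k) (div_pos hε' hsqrt)
  refine hkey.trans ?_
  rw [mul_add]
  gcongr
  rw [← ENNReal.ofReal_mul hsqrt.le, mul_div_cancel₀ _ hsqrt.ne', ENNReal.ofReal_coe_nnreal]
end
end

section
/- Let a compact metric group G act continuously on the Euclidean space ℝ^k and put r := lim_{κ↑1/(4k)} Sep(G; κ, κ). Then for any x ∈ ℝ^k there exists a point z_x in the orbit Gx such that d_{ℝ^k}(z_x, g z_x) ≤ √k · ω_x(+r) + ρ(+√k · ω_x(+r)) for every g ∈ G. -/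
open MeasureTheory Metric Set Filter Topology ENNReal

noncomputable section

lemma quantile_exists {G : Type*} [MeasurableSpace G] [TopologicalSpace G] [CompactSpace G]
    [Nonempty G] [OpensMeasurableSpace G] (μ : Measure G) [IsProbabilityMeasure μ]
    (φ : G → ℝ) (hφ : Continuous φ) (κ : ℝ≥0∞) (hκ0 : 0 < κ) (hκ1 : κ ≤ 1) :
    ∃ a : ℝ, κ ≤ μ {u | φ u ≤ a} ∧ ∀ ε > 0, μ {u | φ u ≤ a - ε} < κ := by
  set S : Set ℝ := {t | κ ≤ μ {u | φ u ≤ t}} with hS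
  obtain ⟨u₀, -, hu₀⟩ := isCompact_univ.exists_isMaxOn univ_nonempty hφ.continuousOn
  obtain ⟨u₁, -, hu₁⟩ := isCompact_univ.exists_isMinOn univ_nonempty hφ.continuousOn
  have hSne : S.Nonempty := by
    refine ⟨φ u₀, ?_⟩
    have : {u | φ u ≤ φ u₀} = univ := eq_univ_of_forall fun u => hu₀ (mem_univ u)
    simp [hS, this, hκ1]
  have hSbd : BddBelow S := by
    refine ⟨φ u₁, fun t ht ↦ ?_⟩
    have hne : {u | φ u ≤ t}.Nonempty := by
      apply nonempty_of_measure_ne_zero (μ := μ)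
      intro h0
      rw [hS, mem_setOf_eq, h0] at ht
      exact absurd ht hκ0.not_ge
    obtain ⟨u, hu⟩ := hne
    exact le_trans (hu₁ (mem_univ u)) hu
  set a := sInf S with ha
  have hup : ∀ t, a < t → t ∈ S := by
    intro t ht
    obtain ⟨s, hs, hst⟩ := exists_lt_of_csInf_lt hSne ht
    exact le_trans hs (measure_mono fun u hu => le_trans hu hst.le)
  refine ⟨a, ?_, ?_⟩
  · have hinter : {u | φ u ≤ a} = ⋂ n : ℕ, {u | φ u ≤ a + 1/(n+1)} := by
      ext u
      simp only [mem_iInter, mem_setOf_eq]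
      constructor
      · intro h n; have : (0:ℝ) < 1/(n+1) := by positivity
        linarith
      · intro h
        have h0 : Tendsto (fun n : ℕ => 1/((n:ℝ)+1)) atTop (𝓝 0) := tendsto_one_div_add_atTop_nhds_zero_nat
        have hlim : Tendsto (fun n : ℕ => a + 1/((n:ℝ)+1)) atTop (𝓝 a) := by
          simpa using (tendsto_const_nhds.add h0)
        exact ge_of_tendsto' hlim h
    have hmeas : ∀ n : ℕ, NullMeasurableSet {u | φ u ≤ a + 1/(n+1)} μ :=
      fun n => ((isClosed_le hφ continuous_const).measurableSet).nullMeasurableSet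
    have htend := tendsto_measure_iInter_atTop hmeas
      (fun m n hmn => fun u hu => by
        simp only [mem_setOf_eq] at *
        have : 1/((n:ℝ)+1) ≤ 1/((m:ℝ)+1) := by
          apply one_div_le_one_div_of_le (by positivity)
          have : (m:ℝ) ≤ n := by exact_mod_cast hmn
          linarith
        linarith)
      ⟨0, measure_ne_top μ _⟩
    rw [hinter]
    refine ge_of_tendsto htend (Filter.Eventually.of_forall fun n => ?_)
    refine hup _ ?_
    have : (0:ℝ) < 1/(n+1) := by positivity
    linarith
  · intro ε hε
    have : a - ε ∉ S := fun h => absurd (csInf_le hSbd h) (by linarith)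
    simpa [hS] using lt_of_not_ge this

theorem stmt_11 {G : Type} [Group G] [MetricSpace G] [CompactSpace G] [IsTopologicalGroup G]
    [MeasurableSpace G] [BorelSpace G]
    (k : ℕ) (hk : 0 < k)
    [MulAction G (EuclideanSpace ℝ (Fin k))]
    [ContinuousSMul G (EuclideanSpace ℝ (Fin k))]
    (μG : Measure G) [μG.IsHaarMeasure] [IsProbabilityMeasure μG]
    (x : EuclideanSpace ℝ (Fin k))
    (r : ℝ≥0∞) (hr : r = ⨅ (κ : ℝ≥0∞) (_ : κ < (4 * (k : ℝ≥0∞))⁻¹), sepDist μG κ κ) :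
    ∃ z ∈ MulAction.orbit G x, ∀ g : G,
      edist z (g • z) ≤
        ENNReal.ofReal (Real.sqrt k) * actOmegaPlus G x r +
          actRhoPlus G (EuclideanSpace ℝ (Fin k))
            (ENNReal.ofReal (Real.sqrt k) * actOmegaPlus G x r) := by
  classical
  have hk1 : (1:ℝ) ≤ k := by exact_mod_cast hk
  have hsk : 0 < Real.sqrt k := Real.sqrt_pos.mpr (by positivity)
  set f : G → EuclideanSpace ℝ (Fin k) := fun u => u • x with hfdef
  have hf : Continuous f := continuous_id.smul continuous_const
  have hfi : ∀ i : Fin k, Continuous fun u => f u i := fun i => (continuous_apply i).comp ((PiLp.continuous_ofLp ..).comp hf)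
  set κ₀ : ℝ≥0∞ := (4 * (k:ℝ≥0∞))⁻¹ with hκ₀
  have hk0' : (k:ℝ≥0∞) ≠ 0 := by exact_mod_cast hk.ne'
  have hkt : (k:ℝ≥0∞) ≠ ⊤ := ENNReal.natCast_ne_top k
  have hκ₀pos : 0 < κ₀ := ENNReal.inv_pos.mpr (by
    exact ENNReal.mul_ne_top (by simp) hkt)
  have hκ₀le1 : κ₀ ≤ 1 := by
    rw [hκ₀]
    rw [ENNReal.inv_le_one]
    calc (1:ℝ≥0∞) ≤ (k:ℝ≥0∞) := by exact_mod_cast hk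
      _ ≤ 4 * k := by
          nth_rewrite 1 [← one_mul (k:ℝ≥0∞)]
          exact mul_le_mul_left (by norm_num) _
  have Ha : ∀ i : Fin k, ∃ a : ℝ, κ₀ ≤ μG {u | f u i ≤ a} ∧ ∀ ε > 0, μG {u | f u i ≤ a - ε} < κ₀ :=
    fun i => quantile_exists μG _ (hfi i) κ₀ hκ₀pos hκ₀le1
  choose a haκ ha using Ha
  have Hb : ∀ i : Fin k, ∃ b : ℝ, κ₀ ≤ μG {u | b ≤ f u i} ∧ ∀ ε > 0, μG {u | b + ε ≤ f u i} < κ₀ := by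
    intro i
    obtain ⟨c, hc1, hc2⟩ := quantile_exists μG (fun u => -(f u i)) (hfi i).neg κ₀ hκ₀pos hκ₀le1
    refine ⟨-c, ?_, ?_⟩
    · convert hc1 using 3
      ext u
      simp only [mem_setOf_eq]
      constructor <;> intro <;> linarith
    · intro ε hε
      convert hc2 ε hε using 3
      ext u
      simp only [mem_setOf_eq]
      constructor <;> intro <;> linarith
  choose b hbκ hb using Hb
  set ω := actOmegaPlus G x r with hω
  have coord_le : ∀ (p q : EuclideanSpace ℝ (Fin k)) (i : Fin k), dist (p i) (q i) ≤ dist p q := by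
    intro p q i
    rw [EuclideanSpace.dist_eq]
    have h1 : dist (p i) (q i) = Real.sqrt (dist (p i) (q i) ^ 2) := (Real.sqrt_sq dist_nonneg).symm
    rw [h1]
    apply Real.sqrt_le_sqrt
    exact Finset.single_le_sum (f := fun j => dist (p j) (q j) ^ 2)
      (fun j _ => sq_nonneg _) (Finset.mem_univ i)
  have hba : ∀ i, ENNReal.ofReal (b i - a i) ≤ ω := by
    intro i
    rw [hω, actOmegaPlus]
    refine le_iInf fun η' => le_iInf fun hη' => ?_
    have hS1 : MeasurableSet {u | f u i ≤ a i} := (isClosed_le (hfi i) continuous_const).measurableSet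
    have hS2 : MeasurableSet {u | b i ≤ f u i} := (isClosed_le continuous_const (hfi i)).measurableSet
    have hsep : setEDist {u | f u i ≤ a i} {u | b i ≤ f u i} ≤ r := by
      rw [hr]
      refine le_iInf fun κ => le_iInf fun hκ => ?_
      rw [sepDist]
      refine le_iSup_of_le {u | f u i ≤ a i} ?_
      refine le_iSup_of_le {u | b i ≤ f u i} ?_
      refine le_iSup_of_le hS1 ?_
      refine le_iSup_of_le hS2 ?_
      refine le_iSup_of_le (le_trans hκ.le (haκ i)) ?_
      exact le_iSup_of_le (le_trans hκ.le (hbκ i)) le_rfl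
    have hlt : setEDist {u | f u i ≤ a i} {u | b i ≤ f u i} < η' := lt_of_le_of_lt hsep hη'
    rw [setEDist] at hlt
    simp only [iInf_lt_iff] at hlt
    obtain ⟨u, hu, v, hv, huv⟩ := hlt
    calc ENNReal.ofReal (b i - a i) ≤ edist (f u) (f v) := by
          rw [edist_dist]
          apply ENNReal.ofReal_le_ofReal
          have hc := coord_le (f u) (f v) i
          have h2 : b i - a i ≤ dist (f u i) (f v i) := by
            rw [Real.dist_eq]
            have h3 : f u i ≤ a i := hu
            have h4 : b i ≤ f v i := hv
            have : b i - a i ≤ f v i - f u i := by linarith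
            calc b i - a i ≤ f v i - f u i := this
              _ ≤ |f u i - f v i| := by
                  rw [abs_sub_comm]
                  exact le_abs_self _
          linarith
      _ ≤ actOmega G x η' := by
          rw [actOmega]
          exact le_iSup_of_le u (le_iSup_of_le v (le_iSup_of_le huv.le le_rfl))
  by_cases hωtop : ω = ⊤
  · refine ⟨x, MulAction.mem_orbit_self x, fun g => ?_⟩
    have htop : ENNReal.ofReal (Real.sqrt k) * ω = ⊤ := by
      rw [hωtop, ENNReal.mul_top]
      simp only [ne_eq, ENNReal.ofReal_eq_zero, not_le]
      exact hsk
    rw [htop, top_add]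
    exact le_top
  set w := ω.toReal with hwdef
  have hw0 : 0 ≤ w := ENNReal.toReal_nonneg
  have hωw : ω = ENNReal.ofReal w := (ENNReal.ofReal_toReal hωtop).symm
  have hbaw : ∀ i, b i - a i ≤ w := by
    intro i
    have h1 := hba i
    rw [hωw] at h1
    exact (ENNReal.ofReal_le_ofReal_iff hw0).mp h1
  set A : ℝ → Set G := fun ε => {u | ∀ i, a i - ε ≤ f u i ∧ f u i ≤ b i + ε} with hAdef
  have hAclosed : ∀ ε, IsClosed (A ε) := by
    intro ε
    have hEq : A ε = ⋂ i, ({u | a i - ε ≤ f u i} ∩ {u | f u i ≤ b i + ε}) := by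
      ext u
      simp only [hAdef, mem_setOf_eq, mem_iInter, mem_inter_iff]
    rw [hEq]
    exact isClosed_iInter fun i =>
      (isClosed_le continuous_const (hfi i)).inter (isClosed_le (hfi i) continuous_const)
  have hAmeas : ∀ ε, MeasurableSet (A ε) := fun ε => (hAclosed ε).measurableSet
  have hAmono : ∀ ε ε' : ℝ, ε ≤ ε' → A ε ⊆ A ε' := by
    intro ε ε' hle u hu i
    exact ⟨by linarith [(hu i).1], by linarith [(hu i).2]⟩
  have harith : (k:ℝ≥0∞) * (κ₀ + κ₀) = 2⁻¹ := by
    rw [hκ₀, ← two_mul]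
    rw [ENNReal.mul_inv (Or.inl (by norm_num)) (Or.inl (by norm_num))]
    rw [show (4:ℝ≥0∞) = 2 * 2 by norm_num]
    rw [ENNReal.mul_inv (Or.inl (by norm_num)) (Or.inl (by norm_num))]
    calc (k:ℝ≥0∞) * (2 * (2⁻¹ * 2⁻¹ * (k:ℝ≥0∞)⁻¹))
        = (2 * 2⁻¹) * 2⁻¹ * ((k:ℝ≥0∞) * (k:ℝ≥0∞)⁻¹) := by ring
      _ = 2⁻¹ := by
          rw [ENNReal.mul_inv_cancel (by norm_num) (by norm_num),
              ENNReal.mul_inv_cancel hk0' hkt, one_mul, mul_one]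
  have hAc : ∀ ε : ℝ, 0 < ε → μG (A ε)ᶜ < 2⁻¹ := by
    intro ε hε
    have hsub : (A ε)ᶜ ⊆ ⋃ i, ({u | f u i ≤ a i - ε} ∪ {u | b i + ε ≤ f u i}) := by
      intro u hu
      simp only [mem_compl_iff, hAdef, mem_setOf_eq, not_forall] at hu
      obtain ⟨i, hi⟩ := hu
      rw [not_and_or] at hi
      refine mem_iUnion.mpr ⟨i, ?_⟩
      rcases hi with h | h
      · push_neg at h
        exact Or.inl (by simp only [mem_setOf_eq]; linarith)
      · push_neg at h
        exact Or.inr (by simp only [mem_setOf_eq]; linarith)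
    calc μG (A ε)ᶜ ≤ ∑ i : Fin k, μG ({u | f u i ≤ a i - ε} ∪ {u | b i + ε ≤ f u i}) :=
          le_trans (measure_mono hsub) (measure_iUnion_fintype_le μG _)
      _ ≤ ∑ i : Fin k, (μG {u | f u i ≤ a i - ε} + μG {u | b i + ε ≤ f u i}) :=
          Finset.sum_le_sum fun i _ => measure_union_le _ _
      _ < ∑ _i : Fin k, (κ₀ + κ₀) := by
          refine ENNReal.sum_lt_sum_of_nonempty ?_ fun i _ => ENNReal.add_lt_add (ha i ε hε) (hb i ε hε)
          rw [Finset.univ_nonempty_iff]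
          exact Fin.pos_iff_nonempty.mp hk
      _ = 2⁻¹ := by
          rw [Finset.sum_const, Finset.card_univ, Fintype.card_fin, nsmul_eq_mul]
          exact harith
  have hAbig : ∀ ε : ℝ, 0 < ε → 2⁻¹ < μG (A ε) := by
    intro ε hε
    have h1 : μG (A ε) + μG (A ε)ᶜ = 1 := prob_add_prob_compl (hAmeas ε)
    by_contra hle
    push_neg at hle
    have : (1:ℝ≥0∞) < 2⁻¹ + 2⁻¹ := by
      calc (1:ℝ≥0∞) = μG (A ε) + μG (A ε)ᶜ := h1.symm
        _ < 2⁻¹ + 2⁻¹ := ENNReal.add_lt_add_of_le_of_lt (by simp) hle (hAc ε hε)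
    rw [ENNReal.inv_two_add_inv_two] at this
    exact absurd this (lt_irrefl _)
  have hAne : ∀ ε : ℝ, 0 < ε → (A ε).Nonempty := by
    intro ε hε
    apply nonempty_of_measure_ne_zero (μ := μG)
    exact fun h0 => absurd (h0 ▸ hAbig ε hε) (by simp)
  obtain ⟨h₀, hh₀⟩ : (⋂ n : ℕ, A (1/(n+1))).Nonempty := by
    apply IsCompact.nonempty_iInter_of_sequence_nonempty_isCompact_isClosed
    · intro n
      apply hAmono
      have h1 : (0:ℝ) < (n:ℝ) + 1 := by positivity
      rw [div_le_div_iff₀ (by positivity) h1]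
      push_cast
      linarith
    · intro n
      exact hAne _ (by positivity)
    · exact (hAclosed _).isCompact
    · intro n
      exact hAclosed _
  have hh : ∀ ε : ℝ, 0 < ε → h₀ ∈ A ε := by
    intro ε hε
    obtain ⟨n, hn⟩ := exists_nat_one_div_lt hε
    exact hAmono _ _ hn.le (mem_iInter.mp hh₀ n)
  have key : ∀ ε : ℝ, 0 < ε → ∀ u v : G, u ∈ A ε → v ∈ A ε →
      dist (f u) (f v) ≤ Real.sqrt k * (w + 2*ε) := by
    intro ε hε u v hu hv
    rw [EuclideanSpace.dist_eq]
    have hcoord : ∀ i : Fin k, dist (f u i) (f v i) ^ 2 ≤ (w + 2*ε)^2 := by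
      intro i
      have h1 := (hu i).1
      have h2 := (hu i).2
      have h3 := (hv i).1
      have h4 := (hv i).2
      have hb' := hbaw i
      have habs : |f u i - f v i| ≤ w + 2*ε := abs_le.mpr ⟨by linarith, by linarith⟩
      rw [Real.dist_eq]
      exact pow_le_pow_left₀ (abs_nonneg _) habs 2
    calc Real.sqrt (∑ i, dist (f u i) (f v i) ^ 2)
        ≤ Real.sqrt (∑ _i : Fin k, (w + 2*ε)^2) :=
          Real.sqrt_le_sqrt (Finset.sum_le_sum fun i _ => hcoord i)
      _ = Real.sqrt k * (w + 2*ε) := by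
          rw [Finset.sum_const, Finset.card_univ, Fintype.card_fin, nsmul_eq_mul,
              Real.sqrt_mul (by positivity), Real.sqrt_sq (by positivity)]
  have hCw : ENNReal.ofReal (Real.sqrt k) * ω = ENNReal.ofReal (Real.sqrt k * w) := by
    rw [hωw, ← ENNReal.ofReal_mul (Real.sqrt_nonneg _)]
  refine ⟨f h₀, ⟨h₀, rfl⟩, fun g => ?_⟩
  have H : ∀ η' : ℝ≥0∞, ENNReal.ofReal (Real.sqrt k) * ω < η' →
      edist (f h₀) (g • f h₀) ≤
        ENNReal.ofReal (Real.sqrt k * w) + actRho G (EuclideanSpace ℝ (Fin k)) η' := by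
    intro η' hη'
    apply ENNReal.le_of_forall_pos_le_add
    intro δ hδ hfin
    rw [hCw] at hη'
    obtain ⟨q, hq0, hq1, hq2⟩ := ENNReal.lt_iff_exists_real_btwn.mp hη'
    have hq : Real.sqrt k * w < q := by
      rw [ENNReal.ofReal_lt_ofReal_iff_of_nonneg (by positivity)] at hq1
      exact hq1
    have hδ' : (0:ℝ) < (δ:ℝ) := hδ
    set ε := min ((q - Real.sqrt k * w)/(2*Real.sqrt k)) ((δ:ℝ)/(2*Real.sqrt k)) with hεdef
    have hεpos : 0 < ε := lt_min (div_pos (by linarith) (by positivity)) (div_pos hδ' (by positivity))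
    have hkey1 : Real.sqrt k * (w + 2*ε) ≤ q := by
      have h1 : ε ≤ (q - Real.sqrt k * w)/(2*Real.sqrt k) := min_le_left _ _
      have h2 : 2*Real.sqrt k * ε ≤ q - Real.sqrt k * w := by
        rw [← le_div_iff₀' (by positivity)]
        exact h1
      nlinarith
    have hkey2 : Real.sqrt k * (2*ε) ≤ (δ:ℝ) := by
      have h1 : ε ≤ (δ:ℝ)/(2*Real.sqrt k) := min_le_right _ _
      have h2 : 2*Real.sqrt k * ε ≤ (δ:ℝ) := by
        rw [← le_div_iff₀' (by positivity)]
        exact h1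
      nlinarith
    obtain ⟨v, hv, hgv⟩ : ∃ v, v ∈ A ε ∧ g * v ∈ A ε := by
      set T := (fun u => g * u) ⁻¹' (A ε) with hTdef
      have hTmeas : MeasurableSet T := (hAmeas ε).preimage (measurable_const_mul g)
      have hTμ : μG T = μG (A ε) := measure_preimage_mul μG g (A ε)
      have hpos : μG (A ε ∩ T) ≠ 0 := by
        intro h0
        have hun := measure_union_add_inter (μ := μG) (A ε) hTmeas
        rw [h0, add_zero] at hun
        have h1 : (1:ℝ≥0∞) < μG (A ε) + μG T := by
          rw [hTμ, ← ENNReal.inv_two_add_inv_two]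
          exact ENNReal.add_lt_add (hAbig ε hεpos) (hAbig ε hεpos)
        rw [← hun] at h1
        exact absurd (lt_of_lt_of_le h1 prob_le_one) (lt_irrefl _)
      obtain ⟨v, hv⟩ := nonempty_of_measure_ne_zero hpos
      exact ⟨v, hv.1, hv.2⟩
    have hd1 : dist (f h₀) (f (g * v)) ≤ Real.sqrt k * (w + 2*ε) :=
      key ε hεpos _ _ (hh ε hεpos) hgv
    have hd2 : dist (f v) (f h₀) ≤ Real.sqrt k * (w + 2*ε) :=
      key ε hεpos _ _ hv (hh ε hεpos)
    have hfgv : f (g * v) = g • f v := mul_smul g v x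
    have hrho : edist (g • f v) (g • f h₀) ≤ actRho G (EuclideanSpace ℝ (Fin k)) η' := by
      rw [actRho]
      refine le_iSup_of_le g (le_iSup_of_le (f v) (le_iSup_of_le (f h₀) (le_iSup_of_le ?_ le_rfl)))
      rw [edist_dist]
      calc ENNReal.ofReal (dist (f v) (f h₀))
          ≤ ENNReal.ofReal (Real.sqrt k * (w + 2*ε)) := ENNReal.ofReal_le_ofReal hd2
        _ ≤ ENNReal.ofReal q := ENNReal.ofReal_le_ofReal hkey1
        _ ≤ η' := hq2.le
    calc edist (f h₀) (g • f h₀)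
        ≤ edist (f h₀) (f (g*v)) + edist (f (g*v)) (g • f h₀) := edist_triangle _ _ _
      _ ≤ ENNReal.ofReal (Real.sqrt k * (w + 2*ε)) + actRho G (EuclideanSpace ℝ (Fin k)) η' := by
          apply add_le_add
          · rw [edist_dist]
            exact ENNReal.ofReal_le_ofReal hd1
          · rw [hfgv]
            exact hrho
      _ ≤ ENNReal.ofReal (Real.sqrt k * w) + actRho G (EuclideanSpace ℝ (Fin k)) η' + δ := by
          have hsplit : Real.sqrt k * (w + 2*ε) = Real.sqrt k * w + Real.sqrt k * (2*ε) := by ring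
          rw [hsplit, ENNReal.ofReal_add (by positivity) (by positivity)]
          have hle : ENNReal.ofReal (Real.sqrt k * (2*ε)) ≤ (δ : ℝ≥0∞) := by
            rw [← ENNReal.ofReal_coe_nnreal]
            exact ENNReal.ofReal_le_ofReal hkey2
          calc ENNReal.ofReal (Real.sqrt k * w) + ENNReal.ofReal (Real.sqrt k * (2*ε))
                + actRho G (EuclideanSpace ℝ (Fin k)) η'
              ≤ ENNReal.ofReal (Real.sqrt k * w) + (δ:ℝ≥0∞)
                + actRho G (EuclideanSpace ℝ (Fin k)) η' := by
                exact add_le_add (add_le_add_right hle _) le_rfl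
            _ = ENNReal.ofReal (Real.sqrt k * w) + actRho G (EuclideanSpace ℝ (Fin k)) η' + δ := by
                ring
  have hconc : edist (f h₀) (g • f h₀) - ENNReal.ofReal (Real.sqrt k * w) ≤
      actRhoPlus G (EuclideanSpace ℝ (Fin k)) (ENNReal.ofReal (Real.sqrt k) * ω) := by
    rw [actRhoPlus]
    exact le_iInf fun η' => le_iInf fun hη' => tsub_le_iff_left.mpr (H η' hη')
  calc edist (f h₀) (g • f h₀)
      ≤ ENNReal.ofReal (Real.sqrt k * w) +
        (edist (f h₀) (g • f h₀) - ENNReal.ofReal (Real.sqrt k * w)) := le_add_tsub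
    _ ≤ ENNReal.ofReal (Real.sqrt k * w) +
        actRhoPlus G (EuclideanSpace ℝ (Fin k)) (ENNReal.ofReal (Real.sqrt k) * ω) :=
        add_le_add_right hconc _
    _ = ENNReal.ofReal (Real.sqrt k) * ω +
        actRhoPlus G (EuclideanSpace ℝ (Fin k)) (ENNReal.ofReal (Real.sqrt k) * ω) := by
        rw [hCw]
end
end

section
/- Let K be a compact metric space and, for δ > 0, let N_K(δ) be the minimum number of Borel subsets of diameter at most δ needed to cover K. Then for every δ, κ > 0 and every finite Borel measure ν on K with m := ν(K), diam(ν, m − κ) ≤ Sep(ν; κ/N_K(δ), κ/N_K(δ)) + 2δ. -/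
open MeasureTheory Metric Set Filter Topology ENNReal

noncomputable section

/-- `N_K(δ)`: the minimum number of Borel subsets of diameter at most `δ` needed
to cover `K`. -/
def coverNum (K : Type*) [PseudoEMetricSpace K] [MeasurableSpace K] (δ : ℝ≥0∞) : ℕ :=
  sInf {n : ℕ | ∃ c : Fin n → Set K,
    (∀ i, MeasurableSet (c i) ∧ EMetric.diam (c i) ≤ δ) ∧ (⋃ i, c i) = univ}

theorem stmt_12 {K : Type*} [MetricSpace K] [CompactSpace K]
    [MeasurableSpace K] [BorelSpace K]
    (ν : Measure K) [IsFiniteMeasure ν]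
    (δ : ℝ) (hδ : 0 < δ) (κ : ℝ≥0∞) (hκ : 0 < κ) :
    partialDiam ν κ ≤
      sepDist ν (κ / (coverNum K (ENNReal.ofReal δ) : ℝ≥0∞))
        (κ / (coverNum K (ENNReal.ofReal δ) : ℝ≥0∞)) + ENNReal.ofReal (2 * δ) := by
  set δ' : ℝ≥0∞ := ENNReal.ofReal δ with hδ'
  have hδ'0 : 0 < δ' := ENNReal.ofReal_pos.2 hδ
  -- the defining set of coverNum is nonempty, by compactness
  have hne : ∃ n : ℕ, n ∈ {n : ℕ | ∃ c : Fin n → Set K,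
      (∀ i, MeasurableSet (c i) ∧ EMetric.diam (c i) ≤ δ') ∧ (⋃ i, c i) = univ} := by
    obtain ⟨t, ht⟩ := IsCompact.elim_finite_subcover (isCompact_univ (X := K))
      (fun x : K => EMetric.ball x (δ' / 2)) (fun x => EMetric.isOpen_ball)
      (fun x _ => mem_iUnion.2 ⟨x, EMetric.mem_ball_self
        (ENNReal.div_pos hδ'0.ne' (by norm_num))⟩)
    refine ⟨t.card, fun i => EMetric.ball ((t.equivFin.symm i : K)) (δ' / 2), fun i =>
      ⟨EMetric.isOpen_ball.measurableSet, ?_⟩, ?_⟩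
    · refine le_trans EMetric.diam_ball ?_
      rw [ENNReal.mul_div_cancel' (by norm_num) (by norm_num)]
    · refine eq_univ_of_forall fun x => ?_
      obtain ⟨y, hyt, hxy⟩ := mem_iUnion₂.1 (ht (mem_univ x))
      exact mem_iUnion.2 ⟨t.equivFin ⟨y, hyt⟩, by simpa using hxy⟩
  set N : ℕ := coverNum K δ' with hNdef
  obtain ⟨c, hc, hcov⟩ : N ∈ _ := Nat.sInf_mem hne
  set κ' : ℝ≥0∞ := κ / (N : ℝ≥0∞) with hκ'
  set I : Finset (Fin N) := Finset.univ.filter (fun i => κ' ≤ ν (c i)) with hI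
  set A : Set K := ⋃ i ∈ I, c i with hA
  have hAmeas : MeasurableSet A := I.measurableSet_biUnion (fun i _ => (hc i).1)
  have hAν : ν univ - κ ≤ ν A := by
    have hsub : Aᶜ ⊆ ⋃ i ∈ Iᶜ, c i := by
      intro x hx
      have : x ∈ ⋃ i, c i := hcov ▸ mem_univ x
      obtain ⟨i, hi⟩ := mem_iUnion.1 this
      exact mem_iUnion₂.2 ⟨i, Finset.mem_compl.2 fun hiI => hx (mem_iUnion₂.2 ⟨i, hiI, hi⟩), hi⟩
    have h1 : ν Aᶜ ≤ κ := by
      refine le_trans (measure_mono hsub) (le_trans (measure_biUnion_finset_le _ _) ?_)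
      have h2 : ∀ i ∈ Iᶜ, ν (c i) ≤ κ' := by
        intro i hi
        have : ¬ κ' ≤ ν (c i) := by simpa [hI] using Finset.mem_compl.1 hi
        exact (not_le.1 this).le
      refine le_trans (Finset.sum_le_card_nsmul _ _ _ h2) ?_
      rw [nsmul_eq_mul]
      rcases Nat.eq_zero_or_pos N with h | h
      · have hcard : Iᶜ.card = 0 := le_antisymm (by simpa [h] using Finset.card_le_univ Iᶜ) (Nat.zero_le _)
        simp [hcard]
      · calc ((Iᶜ.card : ℝ≥0∞)) * κ' ≤ (N : ℝ≥0∞) * κ' := by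
              gcongr
              exact_mod_cast Finset.card_le_card (Finset.subset_univ _) |>.trans (by simp)
          _ = κ' * N := mul_comm _ _
          _ = κ := ENNReal.div_mul_cancel (by exact_mod_cast h.ne') (by simp)
    refine tsub_le_iff_right.2 (le_trans ?_ (add_le_add le_rfl h1))
    rw [← union_compl_self A]
    exact measure_union_le _ _
  -- the diameter bound
  have hdiam : EMetric.diam A ≤ sepDist ν κ' κ' + ENNReal.ofReal (2 * δ) := by
    have h2δ : ENNReal.ofReal (2 * δ) = δ' + δ' := by
      rw [two_mul, ENNReal.ofReal_add hδ.le hδ.le]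
    rw [h2δ]
    refine EMetric.diam_le fun x hx y hy => ?_
    obtain ⟨i, hiI, hxi⟩ := mem_iUnion₂.1 hx
    obtain ⟨j, hjI, hyj⟩ := mem_iUnion₂.1 hy
    have hsep : setEDist (c i) (c j) ≤ sepDist ν κ' κ' := by
      refine le_iSup_of_le (c i) <| le_iSup_of_le (c j) <| le_iSup_of_le (hc i).1 <|
        le_iSup_of_le (hc j).1 <| le_iSup_of_le ?_ <| le_iSup_of_le ?_ le_rfl
      · simpa [hI] using (Finset.mem_filter.1 hiI).2
      · simpa [hI] using (Finset.mem_filter.1 hjI).2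
    have hkey : edist x y - (δ' + δ') ≤ setEDist (c i) (c j) := by
      refine le_iInf fun a => le_iInf fun ha => le_iInf fun b => le_iInf fun hb => ?_
      refine tsub_le_iff_right.2 ?_
      calc edist x y ≤ edist x a + edist a y := edist_triangle _ _ _
        _ ≤ edist x a + (edist a b + edist b y) := by gcongr; exact edist_triangle _ _ _
        _ ≤ δ' + (edist a b + δ') := by
            gcongr
            · exact le_trans (EMetric.edist_le_diam_of_mem hxi ha) (hc i).2
            · exact le_trans (EMetric.edist_le_diam_of_mem hb hyj) (hc j).2
        _ = edist a b + (δ' + δ') := by ring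
    calc edist x y ≤ (edist x y - (δ' + δ')) + (δ' + δ') := le_tsub_add
      _ ≤ setEDist (c i) (c j) + (δ' + δ') := by gcongr
      _ ≤ sepDist ν κ' κ' + (δ' + δ') := by gcongr
  exact le_trans (iInf_le_of_le A (iInf_le_of_le hAmeas (iInf_le_of_le hAν le_rfl))) hdiam
end
end

section
/- Let a compact metric group G act continuously on a compact metric space K, let x ∈ K and δ > 0, and put r_{x,δ} := ω_x(+lim_{κ↑1/(2N_K(δ))} Sep(G; κ, κ)) + 2δ. Then there exists a point z_{x,δ} in the orbit Gx such that d_K(z_{x,δ}, g z_{x,δ}) ≤ r_{x,δ} + ρ(+r_{x,δ}) for every g ∈ G. -/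
open MeasureTheory Metric Set Filter Topology ENNReal Pointwise

noncomputable section

/- Auxiliary lemmas -/

lemma le_sepDist' {X : Type*} [PseudoEMetricSpace X] [MeasurableSpace X]
    {ν : Measure X} {κ₁ κ₂ : ℝ≥0∞} {A B : Set X} (hA : MeasurableSet A)
    (hB : MeasurableSet B) (h1 : κ₁ ≤ ν A) (h2 : κ₂ ≤ ν B) :
    setEDist A B ≤ sepDist ν κ₁ κ₂ :=
  le_iSup_of_le A (le_iSup_of_le B (le_iSup_of_le hA (le_iSup_of_le hB
    (le_iSup_of_le h1 (le_iSup_of_le h2 le_rfl)))))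

lemma le_actOmega' {G : Type*} {X : Type*} [PseudoEMetricSpace G] [SMul G X]
    [PseudoEMetricSpace X] {x : X} {η : ℝ≥0∞} {g g' : G} (h : edist g g' ≤ η) :
    edist (g • x) (g' • x) ≤ actOmega G x η :=
  le_iSup_of_le g (le_iSup_of_le g' (le_iSup_of_le h le_rfl))

lemma le_actRho' {G X : Type*} [SMul G X] [PseudoEMetricSpace X] {η : ℝ≥0∞}
    {g : G} {x y : X} (h : edist x y ≤ η) :
    edist (g • x) (g • y) ≤ actRho G X η :=
  le_iSup_of_le g (le_iSup_of_le x (le_iSup_of_le y (le_iSup_of_le h le_rfl)))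

theorem stmt_13 {G : Type*} [Group G] [MetricSpace G] [CompactSpace G] [IsTopologicalGroup G]
    [MeasurableSpace G] [BorelSpace G]
    {K : Type*} [MetricSpace K] [CompactSpace K] [MeasurableSpace K] [BorelSpace K]
    [MulAction G K] [ContinuousSMul G K]
    (μG : Measure G) [μG.IsHaarMeasure] [IsProbabilityMeasure μG]
    (x : K) (δ : ℝ) (hδ : 0 < δ)
    (r : ℝ≥0∞)
    (hr : r = actOmegaPlus G x
        (⨅ (κ : ℝ≥0∞) (_ : κ < (2 * (coverNum K (ENNReal.ofReal δ) : ℝ≥0∞))⁻¹),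
          sepDist μG κ κ) + ENNReal.ofReal (2 * δ)) :
    ∃ z ∈ MulAction.orbit G x, ∀ g : G,
      edist z (g • z) ≤ r + actRhoPlus G K r := by
  classical
  set N : ℕ := coverNum K (ENNReal.ofReal δ) with hNdef
  set s : ℝ≥0∞ := ⨅ (κ : ℝ≥0∞) (_ : κ < (2 * (N : ℝ≥0∞))⁻¹), sepDist μG κ κ with hs
  set ω : ℝ≥0∞ := actOmegaPlus G x s with hω
  have hrr : r = ω + ENNReal.ofReal (2 * δ) := hr
  -- a cover realizing N
  have hcov : ∃ c : Fin N → Set K,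
      (∀ i, MeasurableSet (c i) ∧ EMetric.diam (c i) ≤ ENNReal.ofReal δ) ∧ (⋃ i, c i) = univ := by
    have hne : {n : ℕ | ∃ c : Fin n → Set K,
        (∀ i, MeasurableSet (c i) ∧ EMetric.diam (c i) ≤ ENNReal.ofReal δ) ∧
        (⋃ i, c i) = univ}.Nonempty := by
      obtain ⟨t, -, htfin, htcov⟩ :=
        finite_cover_balls_of_compact (isCompact_univ (X := K)) (half_pos hδ)
      set T := htfin.toFinset with hT
      refine ⟨T.card, fun i => Metric.ball ((T.equivFin.symm i : K)) (δ/2), fun i => ?_, ?_⟩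
      · refine ⟨measurableSet_ball, ?_⟩
        have h1 : EMetric.diam (Metric.ball ((T.equivFin.symm i : K)) (δ/2))
            ≤ 2 * ENNReal.ofReal (δ/2) := by
          rw [← Metric.emetric_ball]
          exact EMetric.diam_ball
        refine h1.trans ?_
        rw [← ENNReal.ofReal_ofNat 2, ← ENNReal.ofReal_mul (by norm_num)]
        exact ENNReal.ofReal_le_ofReal (by linarith)
      · apply eq_univ_of_univ_subset
        intro y hy
        obtain ⟨p, hp, hyp⟩ := mem_iUnion₂.mp (htcov (mem_univ y))
        have hpT : p ∈ T := htfin.mem_toFinset.mpr hp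
        refine mem_iUnion.mpr ⟨T.equivFin ⟨p, hpT⟩, ?_⟩
        simpa using hyp
    exact Nat.sInf_mem hne
  obtain ⟨c, hc, hcuniv⟩ := hcov
  -- the pullback sets
  set A : Fin N → Set G := fun i => (fun g : G => g • x) ⁻¹' (c i) with hA
  have hcont : Continuous fun g : G => g • x := continuous_id.smul continuous_const
  have hAmeas : ∀ i, MeasurableSet (A i) := fun i => (hc i).1.preimage hcont.measurable
  have hAunion : (⋃ i, A i) = univ := by
    rw [hA, ← preimage_iUnion, hcuniv, preimage_univ]
  -- N is positive
  have hNpos : 0 < N := by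
    rcases Nat.eq_zero_or_pos N with h0 | h
    · exfalso
      have hx : (x : K) ∈ ⋃ i, c i := hcuniv ▸ mem_univ x
      obtain ⟨_, ⟨i, rfl⟩, -⟩ := hx
      rw [h0] at i; exact i.elim0
    · exact h
  have hNne : ((N : ℝ≥0∞)) ≠ 0 := by exact_mod_cast hNpos.ne'
  have hNnt : ((N : ℝ≥0∞)) ≠ ⊤ := ENNReal.natCast_ne_top N
  -- some A i has big measure
  have hexi : ∃ i : Fin N, (N : ℝ≥0∞)⁻¹ ≤ μG (A i) := by
    have hfne : (Finset.univ : Finset (Fin N)).Nonempty := by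
      simpa [Finset.univ_nonempty_iff] using Fin.pos_iff_nonempty.mp hNpos
    obtain ⟨j, -, hj⟩ := Finset.exists_max_image Finset.univ (fun i => μG (A i)) hfne
    refine ⟨j, ?_⟩
    have h1 : (1 : ℝ≥0∞) ≤ ∑ i : Fin N, μG (A i) := by
      calc (1 : ℝ≥0∞) = μG univ := (measure_univ).symm
        _ = μG (⋃ i, A i) := by rw [hAunion]
        _ ≤ ∑ i : Fin N, μG (A i) := measure_iUnion_fintype_le _ _
    have h2 : ∑ i : Fin N, μG (A i) ≤ (N : ℝ≥0∞) * μG (A j) := by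
      calc ∑ i : Fin N, μG (A i) ≤ ∑ _i : Fin N, μG (A j) :=
            Finset.sum_le_sum fun i _ => hj i (Finset.mem_univ i)
        _ = (N : ℝ≥0∞) * μG (A j) := by
            rw [Finset.sum_const, Finset.card_univ, Fintype.card_fin, nsmul_eq_mul]
    have h3 : (1 : ℝ≥0∞) ≤ (N : ℝ≥0∞) * μG (A j) := h1.trans h2
    calc (N : ℝ≥0∞)⁻¹ = (N : ℝ≥0∞)⁻¹ * 1 := (mul_one _).symm
      _ ≤ (N : ℝ≥0∞)⁻¹ * ((N : ℝ≥0∞) * μG (A j)) := mul_le_mul_right h3 _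
      _ = μG (A j) := by rw [← mul_assoc, ENNReal.inv_mul_cancel hNne hNnt, one_mul]
  obtain ⟨i, hi⟩ := hexi
  -- the key separation bound
  have hkey : ∀ g : G, setEDist (A i) (g • A i) ≤ s := by
    intro g
    rw [hs]
    refine le_iInf₂ fun κ hκ => ?_
    have hκN : κ ≤ μG (A i) := by
      refine le_trans (le_trans hκ.le ?_) hi
      exact ENNReal.inv_le_inv.mpr (le_mul_of_one_le_left zero_le one_le_two)
    refine le_sepDist' (hAmeas i) ((hAmeas i).const_smul g) hκN ?_
    rw [measure_smul]
    exact hκN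
  -- a base point
  have hAine : (A i).Nonempty := by
    refine nonempty_of_measure_ne_zero (μ := μG) fun h0 => ?_
    rw [h0] at hi
    exact (ENNReal.inv_ne_zero.mpr hNnt) (le_antisymm hi zero_le)
  obtain ⟨g₀, hg₀⟩ := hAine
  refine ⟨g₀ • x, ⟨g₀, rfl⟩, fun g => ?_⟩
  set z : K := g₀ • x with hz
  -- trivial cases
  rcases eq_or_ne (actRhoPlus G K r) ⊤ with hρ | hρ
  · rw [hρ, add_top]; exact le_top
  rcases eq_or_ne ω ⊤ with hωt | hωt
  · rw [hrr, hωt, top_add, top_add]; exact le_top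
  -- main bound
  have hδr : ENNReal.ofReal δ ≤ r := by
    rw [hrr]
    exact le_trans (ENNReal.ofReal_le_ofReal (by linarith)) le_add_self
  have hbound : edist z (g • z) ≤ ENNReal.ofReal δ + ω + actRhoPlus G K r := by
    refine ENNReal.le_of_forall_pos_le_add fun ε hε hfin => ?_
    set ε2 : ℝ≥0∞ := (ε : ℝ≥0∞) / 2 with hε2def
    have hε2ne : ε2 ≠ 0 := by
      simp [hε2def, ENNReal.div_eq_zero_iff, hε.ne']
    obtain ⟨η₁, hη₁, hη₁lt⟩ : ∃ η₁, s < η₁ ∧ actOmega G x η₁ < ω + ε2 := by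
      have h1 : actOmegaPlus G x s < ω + ε2 := hω ▸ ENNReal.lt_add_right hωt hε2ne
      rw [actOmegaPlus] at h1
      simpa [iInf_lt_iff] using h1
    obtain ⟨η₂, hη₂, hη₂lt⟩ : ∃ η₂, r < η₂ ∧ actRho G K η₂ < actRhoPlus G K r + ε2 := by
      have h1 : (⨅ (η' : ℝ≥0∞) (_ : r < η'), actRho G K η') < actRhoPlus G K r + ε2 :=
        ENNReal.lt_add_right hρ hε2ne
      simpa [iInf_lt_iff] using h1
    obtain ⟨a, ha, b, hb, hab⟩ : ∃ a ∈ A i, ∃ b ∈ g • A i, edist a b < η₁ := by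
      have h2 : setEDist (A i) (g • A i) < η₁ := lt_of_le_of_lt (hkey g) hη₁
      rw [setEDist] at h2
      simpa [iInf_lt_iff] using h2
    obtain ⟨h', hh', rfl⟩ := hb
    have t1 : edist z (a • x) ≤ ENNReal.ofReal δ :=
      le_trans (EMetric.edist_le_diam_of_mem hg₀ ha) (hc i).2
    have t2 : edist (a • x) (g • (h' • x)) ≤ actOmega G x η₁ := by
      have := le_actOmega' (g := a) (g' := g • h') (x := x) hab.le
      rwa [smul_eq_mul, mul_smul] at this
    have t3 : edist (g • (h' • x)) (g • z) ≤ actRho G K η₂ := by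
      refine le_actRho' ?_
      refine le_trans (le_trans (EMetric.edist_le_diam_of_mem hh' hg₀) (hc i).2) ?_
      exact le_trans hδr hη₂.le
    calc edist z (g • z)
        ≤ edist z (a • x) + edist (a • x) (g • (h' • x)) + edist (g • (h' • x)) (g • z) :=
          edist_triangle4 _ _ _ _
      _ ≤ ENNReal.ofReal δ + (ω + ε2) + (actRhoPlus G K r + ε2) :=
          add_le_add (add_le_add t1 (t2.trans hη₁lt.le)) (t3.trans hη₂lt.le)
      _ = ENNReal.ofReal δ + ω + actRhoPlus G K r + (ε2 + ε2) := by ring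
      _ = ENNReal.ofReal δ + ω + actRhoPlus G K r + ε := by
          rw [hε2def, ENNReal.add_halves]
  refine hbound.trans ?_
  have hfin2 : ENNReal.ofReal δ + ω ≤ r := by
    rw [hrr, add_comm ω]
    exact add_le_add (ENNReal.ofReal_le_ofReal (by linarith)) le_rfl
  exact add_le_add hfin2 le_rfl
end
end

section
/- Let (C, d_C) be a circle in ℝ² equipped with its Riemannian (arclength) distance function d_C, and let ν be a finite Borel measure on C with m := ν(C). Then for every κ > 0, diam(ν, m − κ) ≤ (π/√2)·Sep(ν; κ/4, κ/4), where the partial diameter and separation distance are taken with respect to d_C. -/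
open MeasureTheory Metric Set Filter Topology ENNReal

noncomputable section

/-- The Riemannian (arclength) distance on the circle of radius `ρ` about `p` in `ℝ²`:
the length `ρ · ∠ x p y` of the shorter arc joining `x` and `y`. -/
def arcDist (p : EuclideanSpace ℝ (Fin 2)) (ρ : ℝ)
    (x y : Metric.sphere p ρ) : ℝ :=
  ρ * EuclideanGeometry.angle (x : EuclideanSpace ℝ (Fin 2)) p
    (y : EuclideanSpace ℝ (Fin 2))

/-- The diameter of a set with respect to an arbitrary distance function `d`. -/
def diamWith {α : Type*} (d : α → α → ℝ) (A : Set α) : ℝ≥0∞ :=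
  ⨆ (x ∈ A) (y ∈ A), ENNReal.ofReal (d x y)

/-- The partial diameter `diam(ν, ν(α) − κ)` with respect to a distance function `d`. -/
def partialDiamWith {α : Type*} [MeasurableSpace α] (d : α → α → ℝ)
    (ν : Measure α) (κ : ℝ≥0∞) : ℝ≥0∞ :=
  ⨅ (A : Set α) (_ : MeasurableSet A) (_ : ν univ - κ ≤ ν A), diamWith d A

/-- The separation distance `Sep(ν; κ₁, κ₂)` with respect to a distance function `d`. -/
def sepDistWith {α : Type*} [MeasurableSpace α] (d : α → α → ℝ)
    (ν : Measure α) (κ₁ κ₂ : ℝ≥0∞) : ℝ≥0∞ :=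
  ⨆ (A : Set α) (B : Set α) (_ : MeasurableSet A) (_ : MeasurableSet B)
    (_ : κ₁ ≤ ν A) (_ : κ₂ ≤ ν B), ⨅ (x ∈ A) (y ∈ B), ENNReal.ofReal (d x y)

/-- One-sided quantile lemma: there is a threshold `a` such that `{f ≤ a}` has mass at least
`κ4` while `{f < a}` has mass at most `κ4`. -/
lemma one_sided_quantile {α : Type*} [MeasurableSpace α] (ν : Measure α) [IsFiniteMeasure ν]
    (κ4 : ℝ≥0∞) (hκ4 : 0 < κ4) (f : α → ℝ) (hf : Measurable f)
    (lo hi : ℝ) (hlo : ∀ x, lo ≤ f x) (hhi : ∀ x, f x ≤ hi)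
    (hm : κ4 ≤ ν Set.univ) :
    ∃ a : ℝ, κ4 ≤ ν {x | f x ≤ a} ∧ ν {x | f x < a} ≤ κ4 := by
  set T : Set ℝ := {t | κ4 ≤ ν {x | f x ≤ t}} with hT
  have hTne : hi ∈ T := by
    have huniv : {x | f x ≤ hi} = Set.univ := eq_univ_of_forall fun x => hhi x
    simpa [hT, huniv] using hm
  have hTbdd : BddBelow T := by
    refine ⟨lo, fun t ht => ?_⟩
    by_contra hlt
    push_neg at hlt
    have hempty : {x | f x ≤ t} = (∅ : Set α) := by
      ext x; simp only [mem_setOf_eq, mem_empty_iff_false, iff_false, not_le]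
      exact lt_of_lt_of_le hlt (hlo x)
    rw [hT, mem_setOf_eq, hempty, measure_empty] at ht
    exact absurd ht (by simpa using hκ4.ne')
  set a := sInf T with ha
  have hup : ∀ {t t' : ℝ}, t ∈ T → t ≤ t' → t' ∈ T := by
    intro t t' ht htt'
    exact le_trans ht (measure_mono fun x hx => le_trans hx htt')
  refine ⟨a, ?_, ?_⟩
  · have heq : {x | f x ≤ a} = ⋂ n : ℕ, {x | f x ≤ a + ((n : ℝ) + 1)⁻¹} := by
      ext x
      simp only [mem_setOf_eq, mem_iInter]
      constructor
      · intro h n; exact h.trans (le_add_of_nonneg_right (by positivity))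
      · intro h
        by_contra hlt
        push_neg at hlt
        obtain ⟨n, hn⟩ := exists_nat_one_div_lt (sub_pos.2 hlt)
        have := h n
        rw [one_div] at hn
        linarith
    have hmeas : ∀ n : ℕ, NullMeasurableSet {x | f x ≤ a + ((n : ℝ) + 1)⁻¹} ν :=
      fun n => (measurableSet_le hf measurable_const).nullMeasurableSet
    have hanti : Antitone fun n : ℕ => {x | f x ≤ a + ((n : ℝ) + 1)⁻¹} := by
      intro m n hmn x hx
      refine le_trans hx (add_le_add (le_refl a) ?_)
      have h1 : (0:ℝ) < (m : ℝ) + 1 := by positivity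
      exact inv_anti₀ h1 (by exact_mod_cast Nat.add_le_add_right hmn 1)
    rw [heq, Directed.measure_iInter hmeas hanti.directed_ge ⟨0, measure_ne_top ν _⟩]
    refine le_iInf fun n => ?_
    have hlt : a < a + ((n : ℝ) + 1)⁻¹ := lt_add_of_pos_right a (by positivity)
    obtain ⟨t, htT, htlt⟩ := (csInf_lt_iff hTbdd ⟨hi, hTne⟩).1 hlt
    exact hup htT htlt.le
  · have heq : {x | f x < a} = ⋃ n : ℕ, {x | f x ≤ a - ((n : ℝ) + 1)⁻¹} := by
      ext x
      simp only [mem_setOf_eq, mem_iUnion]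
      constructor
      · intro h
        obtain ⟨n, hn⟩ := exists_nat_one_div_lt (sub_pos.2 h)
        rw [one_div] at hn
        exact ⟨n, by linarith⟩
      · rintro ⟨n, hn⟩
        have : (0:ℝ) < ((n:ℝ)+1)⁻¹ := by positivity
        linarith
    have hmono : Monotone fun n : ℕ => {x | f x ≤ a - ((n : ℝ) + 1)⁻¹} := by
      intro m n hmn x hx
      refine le_trans hx (sub_le_sub_left ?_ a)
      have h1 : (0:ℝ) < (m : ℝ) + 1 := by positivity
      exact inv_anti₀ h1 (by exact_mod_cast Nat.add_le_add_right hmn 1)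
    rw [heq, hmono.directed_le.measure_iUnion]
    refine iSup_le fun n => ?_
    have hnotin : a - ((n : ℝ) + 1)⁻¹ ∉ T := by
      intro hin
      have := csInf_le hTbdd hin
      have hpos : (0:ℝ) < ((n:ℝ)+1)⁻¹ := by positivity
      rw [← ha] at this
      linarith
    exact (not_le.1 hnotin).le

/-- Two-sided quantile lemma. -/
lemma two_sided_quantile {α : Type*} [MeasurableSpace α] (ν : Measure α) [IsFiniteMeasure ν]
    (κ4 : ℝ≥0∞) (hκ4 : 0 < κ4) (f : α → ℝ) (hf : Measurable f)
    (lo hi : ℝ) (hlo : ∀ x, lo ≤ f x) (hhi : ∀ x, f x ≤ hi)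
    (hm : κ4 + κ4 < ν Set.univ) :
    ∃ a b : ℝ, a ≤ b ∧ κ4 ≤ ν {x | f x ≤ a} ∧ κ4 ≤ ν {x | b ≤ f x} ∧
      ν {x | f x < a} ≤ κ4 ∧ ν {x | b < f x} ≤ κ4 := by
  have hm' : κ4 ≤ ν Set.univ := le_trans (le_add_self) hm.le
  obtain ⟨a, ha1, ha2⟩ := one_sided_quantile ν κ4 hκ4 f hf lo hi hlo hhi hm'
  obtain ⟨a', hb1, hb2⟩ := one_sided_quantile ν κ4 hκ4 (fun x => -f x) (hf.neg)
    (-hi) (-lo) (fun x => neg_le_neg (hhi x)) (fun x => neg_le_neg (hlo x)) hm'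
  refine ⟨a, -a', ?_, ha1, ?_, ha2, ?_⟩
  · by_contra hab
    push_neg at hab
    have h1 : ν {x | f x ≤ -a'} ≤ κ4 :=
      le_trans (measure_mono fun x hx => lt_of_le_of_lt hx hab) ha2
    have h2 : ν {x | -a' < f x} ≤ κ4 := by
      refine le_trans (measure_mono fun x hx => ?_) hb2
      simp only [mem_setOf_eq] at hx ⊢
      linarith
    have : ν Set.univ ≤ κ4 + κ4 := by
      have huniv : (Set.univ : Set α) = {x | f x ≤ -a'} ∪ {x | -a' < f x} := by
        ext x; simp [le_or_gt]
      rw [huniv]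
      exact le_trans (measure_union_le _ _) (add_le_add h1 h2)
    exact absurd this (not_le.2 hm)
  · refine le_trans hb1 (measure_mono fun x hx => ?_)
    simp only [mem_setOf_eq] at hx ⊢
    linarith
  · refine le_trans (measure_mono fun x hx => ?_) hb2
    simp only [mem_setOf_eq] at hx ⊢
    linarith

/-- The chord length in terms of the central angle. -/
lemma chord_eq (p : EuclideanSpace ℝ (Fin 2)) (ρ : ℝ) (hρ : 0 < ρ)
    (x y : Metric.sphere p ρ) :
    dist (x : EuclideanSpace ℝ (Fin 2)) (y : EuclideanSpace ℝ (Fin 2)) =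
      2 * ρ * Real.sin (EuclideanGeometry.angle (x : EuclideanSpace ℝ (Fin 2)) p
        (y : EuclideanSpace ℝ (Fin 2)) / 2) := by
  set θ := EuclideanGeometry.angle (x : EuclideanSpace ℝ (Fin 2)) p
    (y : EuclideanSpace ℝ (Fin 2)) with hθ
  have hθ0 : 0 ≤ θ := EuclideanGeometry.angle_nonneg _ _ _
  have hθπ : θ ≤ Real.pi := EuclideanGeometry.angle_le_pi _ _ _
  have hxp : dist (x : EuclideanSpace ℝ (Fin 2)) p = ρ := mem_sphere.1 x.2
  have hyp : dist (y : EuclideanSpace ℝ (Fin 2)) p = ρ := mem_sphere.1 y.2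
  have hlaw := EuclideanGeometry.law_cos (x : EuclideanSpace ℝ (Fin 2)) p
    (y : EuclideanSpace ℝ (Fin 2))
  rw [hxp, hyp, ← hθ] at hlaw
  have hcos : Real.cos θ = 1 - 2 * Real.sin (θ / 2) ^ 2 := by
    have hc := Real.sin_sq_eq_half_sub (θ / 2)
    rw [show 2 * (θ / 2) = θ by ring] at hc
    linarith
  have hs0 : 0 ≤ Real.sin (θ / 2) :=
    Real.sin_nonneg_of_nonneg_of_le_pi (by linarith) (by linarith)
  have hd0 : 0 ≤ dist (x : EuclideanSpace ℝ (Fin 2)) (y : EuclideanSpace ℝ (Fin 2)) :=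
    dist_nonneg
  have h4 : dist (x : EuclideanSpace ℝ (Fin 2)) (y : EuclideanSpace ℝ (Fin 2)) ^ 2 =
      (2 * ρ * Real.sin (θ / 2)) ^ 2 := by nlinarith [hlaw, hcos]
  calc dist (x : EuclideanSpace ℝ (Fin 2)) (y : EuclideanSpace ℝ (Fin 2))
      = Real.sqrt (dist (x : EuclideanSpace ℝ (Fin 2)) (y : EuclideanSpace ℝ (Fin 2)) ^ 2) :=
        (Real.sqrt_sq hd0).symm
    _ = Real.sqrt ((2 * ρ * Real.sin (θ / 2)) ^ 2) := by rw [h4]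
    _ = 2 * ρ * Real.sin (θ / 2) := Real.sqrt_sq (by positivity)

/-- Comparison between the chordal (Euclidean) and arclength distances. -/
lemma arc_le (p : EuclideanSpace ℝ (Fin 2)) (ρ : ℝ) (hρ : 0 < ρ)
    (x y : Metric.sphere p ρ) :
    dist (x : EuclideanSpace ℝ (Fin 2)) (y : EuclideanSpace ℝ (Fin 2)) ≤ arcDist p ρ x y ∧
      arcDist p ρ x y ≤ (Real.pi / 2) *
        dist (x : EuclideanSpace ℝ (Fin 2)) (y : EuclideanSpace ℝ (Fin 2)) := by
  set θ := EuclideanGeometry.angle (x : EuclideanSpace ℝ (Fin 2)) p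
    (y : EuclideanSpace ℝ (Fin 2)) with hθ
  have hθ0 : 0 ≤ θ := EuclideanGeometry.angle_nonneg _ _ _
  have hθπ : θ ≤ Real.pi := EuclideanGeometry.angle_le_pi _ _ _
  have hchord := chord_eq p ρ hρ x y
  rw [← hθ] at hchord
  have harc : arcDist p ρ x y = ρ * θ := rfl
  have hsle : Real.sin (θ / 2) ≤ θ / 2 := Real.sin_le (by linarith)
  have hslow : 2 / Real.pi * (θ / 2) ≤ Real.sin (θ / 2) :=
    Real.mul_le_sin (by linarith) (by linarith)
  have hπ : 0 < Real.pi := Real.pi_pos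
  constructor
  · rw [hchord, harc]; nlinarith
  · rw [hchord, harc]
    have hθπs : θ ≤ Real.pi * Real.sin (θ / 2) := by
      have h := mul_le_mul_of_nonneg_left hslow hπ.le
      have heq : Real.pi * (2 / Real.pi * (θ / 2)) = θ := by field_simp
      rw [heq] at h
      exact h
    have hs0 : 0 ≤ Real.sin (θ / 2) :=
      Real.sin_nonneg_of_nonneg_of_le_pi (by linarith) (by linarith)
    nlinarith [mul_le_mul_of_nonneg_left hθπs hρ.le]

/-- Coordinates are 1-Lipschitz for the Euclidean distance. -/
lemma coord_lip (i : Fin 2) (x y : EuclideanSpace ℝ (Fin 2)) :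
    |x i - y i| ≤ dist x y := by
  rw [EuclideanSpace.dist_eq]
  have h1 : |x i - y i| = Real.sqrt (dist (x i) (y i) ^ 2) := by
    rw [Real.dist_eq, sq_abs, Real.sqrt_sq_eq_abs]
  rw [h1]
  apply Real.sqrt_le_sqrt
  exact Finset.single_le_sum (f := fun j => dist (x j) (y j) ^ 2)
    (fun j _ => sq_nonneg _) (Finset.mem_univ i)

theorem stmt_17 (p : EuclideanSpace ℝ (Fin 2)) (ρ : ℝ) (hρ : 0 < ρ)
    (ν : Measure (Metric.sphere p ρ)) [IsFiniteMeasure ν]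
    (κ : ℝ≥0∞) (hκ : 0 < κ) :
    partialDiamWith (arcDist p ρ) ν κ ≤
      ENNReal.ofReal (Real.pi / Real.sqrt 2) *
        sepDistWith (arcDist p ρ) ν (κ / 4) (κ / 4) := by
  classical
  by_cases hm : ν Set.univ ≤ κ
  · have h0 : ν Set.univ - κ = 0 := tsub_eq_zero_of_le hm
    have h1 : partialDiamWith (arcDist p ρ) ν κ ≤
        diamWith (arcDist p ρ) (∅ : Set (Metric.sphere p ρ)) := by
      refine iInf_le_of_le ∅ (iInf_le_of_le MeasurableSet.empty (iInf_le_of_le ?_ le_rfl))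
      rw [h0]; exact zero_le
    have h2 : diamWith (arcDist p ρ) (∅ : Set (Metric.sphere p ρ)) = 0 := by
      simp [diamWith]
    rw [h2] at h1
    exact h1.trans zero_le
  push_neg at hm
  set κ4 := κ / 4 with hκ4def
  have hκ4 : 0 < κ4 := ENNReal.div_pos hκ.ne' (by norm_num)
  have h4 : κ4 + κ4 + κ4 + κ4 = κ := by
    rw [show κ4 + κ4 + κ4 + κ4 = 4 * κ4 by ring, hκ4def]
    exact ENNReal.mul_div_cancel' (by norm_num) (by norm_num)
  have hsum : κ4 + κ4 < ν Set.univ := by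
    refine lt_of_le_of_lt ?_ hm
    calc κ4 + κ4 ≤ κ4 + κ4 + κ4 + κ4 :=
      le_trans (self_le_add_right _ _) (self_le_add_right _ _)
    _ = κ := h4
  set f : Fin 2 → Metric.sphere p ρ → ℝ :=
    fun i x => (x : EuclideanSpace ℝ (Fin 2)) i with hf
  have hfc : ∀ i, Continuous (f i) :=
    fun i => (EuclideanSpace.proj (𝕜 := ℝ) i).continuous.comp continuous_subtype_val
  have hfm : ∀ i, Measurable (f i) := fun i => (hfc i).measurable
  have hbound : ∀ (i : Fin 2) (x : Metric.sphere p ρ),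
      p i - ρ ≤ f i x ∧ f i x ≤ p i + ρ := by
    intro i x
    have h := coord_lip i (x : EuclideanSpace ℝ (Fin 2)) p
    rw [mem_sphere.1 x.2] at h
    have := abs_le.1 h
    constructor <;> [linarith [this.1]; linarith [this.2]]
  have hLip : ∀ (i : Fin 2) (x y : Metric.sphere p ρ), |f i x - f i y| ≤ arcDist p ρ x y :=
    fun i x y => le_trans (coord_lip i x y) (arc_le p ρ hρ x y).1
  obtain ⟨a₀, b₀, hab₀, hA₀, hB₀, hA₀', hB₀'⟩ :=
    two_sided_quantile ν κ4 hκ4 (f 0) (hfm 0) (p 0 - ρ) (p 0 + ρ)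
      (fun x => (hbound 0 x).1) (fun x => (hbound 0 x).2) hsum
  obtain ⟨a₁, b₁, hab₁, hA₁, hB₁, hA₁', hB₁'⟩ :=
    two_sided_quantile ν κ4 hκ4 (f 1) (hfm 1) (p 1 - ρ) (p 1 + ρ)
      (fun x => (hbound 1 x).1) (fun x => (hbound 1 x).2) hsum
  -- separation bound for each coordinate
  have hsep : ∀ (i : Fin 2) (a b : ℝ), κ4 ≤ ν {x | f i x ≤ a} → κ4 ≤ ν {x | b ≤ f i x} →
      ENNReal.ofReal (b - a) ≤ sepDistWith (arcDist p ρ) ν (κ / 4) (κ / 4) := by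
    intro i a b h1 h2
    have hAm : MeasurableSet {x | f i x ≤ a} := measurableSet_le (hfm i) measurable_const
    have hBm : MeasurableSet {x | b ≤ f i x} := measurableSet_le measurable_const (hfm i)
    refine le_trans ?_ (le_iSup_of_le {x | f i x ≤ a} (le_iSup_of_le {x | b ≤ f i x}
      (le_iSup_of_le hAm (le_iSup_of_le hBm (le_iSup_of_le h1 (le_iSup_of_le h2 le_rfl))))))
    refine le_iInf₂ fun x hx => le_iInf₂ fun y hy => ENNReal.ofReal_le_ofReal ?_
    have hl := hLip i x y
    have hx' : f i x ≤ a := hx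
    have hy' : b ≤ f i y := hy
    have habs : f i y - f i x ≤ |f i x - f i y| := by
      rw [abs_sub_comm]; exact le_abs_self _
    linarith
  have hr0 := hsep 0 a₀ b₀ hA₀ hB₀
  have hr1 := hsep 1 a₁ b₁ hA₁ hB₁
  set A : Set (Metric.sphere p ρ) :=
    {x | (a₀ ≤ f 0 x ∧ f 0 x ≤ b₀) ∧ (a₁ ≤ f 1 x ∧ f 1 x ≤ b₁)} with hA
  have hAmeas : MeasurableSet A := by
    rw [hA]
    refine MeasurableSet.inter ?_ ?_
    · exact (measurableSet_le measurable_const (hfm 0)).inter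
        (measurableSet_le (hfm 0) measurable_const)
    · exact (measurableSet_le measurable_const (hfm 1)).inter
        (measurableSet_le (hfm 1) measurable_const)
  have hcompl : ν Aᶜ ≤ κ := by
    have hsub : Aᶜ ⊆ {x | f 0 x < a₀} ∪ {x | b₀ < f 0 x} ∪ {x | f 1 x < a₁} ∪
        {x | b₁ < f 1 x} := by
      intro x hx
      simp only [mem_union, mem_setOf_eq]
      by_contra hc
      push_neg at hc
      exact hx ⟨⟨hc.1.1.1, hc.1.1.2⟩, ⟨hc.1.2, hc.2⟩⟩
    calc ν Aᶜ ≤ ν ({x | f 0 x < a₀} ∪ {x | b₀ < f 0 x} ∪ {x | f 1 x < a₁} ∪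
          {x | b₁ < f 1 x}) := measure_mono hsub
      _ ≤ ν {x | f 0 x < a₀} + ν {x | b₀ < f 0 x} + ν {x | f 1 x < a₁} +
          ν {x | b₁ < f 1 x} := by
          refine le_trans (measure_union_le _ _) ?_
          refine add_le_add ?_ le_rfl
          refine le_trans (measure_union_le _ _) ?_
          exact add_le_add (measure_union_le _ _) le_rfl
      _ ≤ κ4 + κ4 + κ4 + κ4 := by
          exact add_le_add (add_le_add (add_le_add hA₀' hB₀') hA₁') hB₁'
      _ = κ := h4
  have hmass : ν Set.univ - κ ≤ ν A := by
    rw [tsub_le_iff_right]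
    calc ν Set.univ = ν A + ν Aᶜ := (measure_add_measure_compl hAmeas).symm
      _ ≤ ν A + κ := add_le_add le_rfl hcompl
  have hdiam : diamWith (arcDist p ρ) A ≤
      ENNReal.ofReal (Real.pi / Real.sqrt 2) *
        sepDistWith (arcDist p ρ) ν (κ / 4) (κ / 4) := by
    refine iSup₂_le fun x hx => iSup₂_le fun y hy => ?_
    have hx' : (a₀ ≤ f 0 x ∧ f 0 x ≤ b₀) ∧ (a₁ ≤ f 1 x ∧ f 1 x ≤ b₁) := hx
    have hy' : (a₀ ≤ f 0 y ∧ f 0 y ≤ b₀) ∧ (a₁ ≤ f 1 y ∧ f 1 y ≤ b₁) := hy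
    set M := max (b₀ - a₀) (b₁ - a₁) with hM
    have hM0 : 0 ≤ M := le_max_of_le_left (by linarith)
    have hcoord0 : |f 0 x - f 0 y| ≤ M := by
      refine le_max_of_le_left ?_
      rw [abs_le]; constructor <;> [linarith [hx'.1.1, hy'.1.2]; linarith [hx'.1.2, hy'.1.1]]
    have hcoord1 : |f 1 x - f 1 y| ≤ M := by
      refine le_max_of_le_right ?_
      rw [abs_le]; constructor <;> [linarith [hx'.2.1, hy'.2.2]; linarith [hx'.2.2, hy'.2.1]]
    have hd2 : dist (x : EuclideanSpace ℝ (Fin 2)) (y : EuclideanSpace ℝ (Fin 2)) ≤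
        Real.sqrt 2 * M := by
      rw [EuclideanSpace.dist_eq]
      have hsum2 : ∑ i : Fin 2, dist ((x : EuclideanSpace ℝ (Fin 2)) i)
          ((y : EuclideanSpace ℝ (Fin 2)) i) ^ 2 ≤ 2 * M ^ 2 := by
        rw [Fin.sum_univ_two, Real.dist_eq, Real.dist_eq]
        have e0 : |(x : EuclideanSpace ℝ (Fin 2)) 0 - (y : EuclideanSpace ℝ (Fin 2)) 0| ≤ M :=
          hcoord0
        have e1 : |(x : EuclideanSpace ℝ (Fin 2)) 1 - (y : EuclideanSpace ℝ (Fin 2)) 1| ≤ M :=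
          hcoord1
        nlinarith [abs_nonneg ((x : EuclideanSpace ℝ (Fin 2)) 0 -
          (y : EuclideanSpace ℝ (Fin 2)) 0), abs_nonneg ((x : EuclideanSpace ℝ (Fin 2)) 1 -
          (y : EuclideanSpace ℝ (Fin 2)) 1), sq_abs ((x : EuclideanSpace ℝ (Fin 2)) 0 -
          (y : EuclideanSpace ℝ (Fin 2)) 0), sq_abs ((x : EuclideanSpace ℝ (Fin 2)) 1 -
          (y : EuclideanSpace ℝ (Fin 2)) 1)]
      calc Real.sqrt (∑ i : Fin 2, dist ((x : EuclideanSpace ℝ (Fin 2)) i)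
            ((y : EuclideanSpace ℝ (Fin 2)) i) ^ 2) ≤ Real.sqrt (2 * M ^ 2) :=
          Real.sqrt_le_sqrt hsum2
        _ = Real.sqrt 2 * M := by
            rw [Real.sqrt_mul (by norm_num), Real.sqrt_sq hM0]
    have hs2 : Real.sqrt 2 * Real.sqrt 2 = 2 := Real.mul_self_sqrt (by norm_num)
    have hs2pos : (0:ℝ) < Real.sqrt 2 := by positivity
    have harc : arcDist p ρ x y ≤ (Real.pi / Real.sqrt 2) * M := by
      have h1 := (arc_le p ρ hρ x y).2
      have h2 : (Real.pi / 2) * dist (x : EuclideanSpace ℝ (Fin 2))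
          (y : EuclideanSpace ℝ (Fin 2)) ≤ (Real.pi / 2) * (Real.sqrt 2 * M) :=
        mul_le_mul_of_nonneg_left hd2 (by positivity)
      have h3 : (Real.pi / 2) * (Real.sqrt 2 * M) = (Real.pi / Real.sqrt 2) * M := by
        field_simp
        linear_combination M * hs2
      linarith
    calc ENNReal.ofReal (arcDist p ρ x y)
        ≤ ENNReal.ofReal ((Real.pi / Real.sqrt 2) * M) := ENNReal.ofReal_le_ofReal harc
      _ = ENNReal.ofReal (Real.pi / Real.sqrt 2) * ENNReal.ofReal M :=
          ENNReal.ofReal_mul (by positivity)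
      _ ≤ ENNReal.ofReal (Real.pi / Real.sqrt 2) *
          sepDistWith (arcDist p ρ) ν (κ / 4) (κ / 4) := by
          refine mul_le_mul_right ?_ _
          rcases le_total (b₀ - a₀) (b₁ - a₁) with h | h
          · rw [hM, max_eq_right h]; exact hr1
          · rw [hM, max_eq_left h]; exact hr0
  exact le_trans (iInf_le_of_le A (iInf_le_of_le hAmeas (iInf_le_of_le hmass le_rfl))) hdiam
end
end
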